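/- arXiv:2208.09091 — 4 statements merged into one kernel-verified Lean document; each statement's English description precedes it below -/
import Mathlib

section
/- Let Φ₁,Φ₂:ℕ→(0,∞) be functions tending to infinity. Suppose (log Φ₂(n))/n converges as n→∞ to log B₂ with 1 ≤ B₂ < ∞, and liminf_{n→∞} (log Φ₁(n))/n > 2·log B₂ (the liminf possibly being +∞). Then F(Φ₁,Φ₂) = ∅. -/
open Filter MeasureTheory Set
open scoped ENNReal NNReal

noncomputable section

/-- The Gauss map `T(x) = 1/x - ⌊1/x⌋` on `[0,1)`, with `T 0 = 0`. -/
def gaussMap (x : ℝ) : ℝ := Int.fract (1 / x)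

/-- The `n`-th partial quotient `a_n(x) = ⌊1 / T^[n-1] x⌋` (for `n ≥ 1`). -/
def pq (x : ℝ) (n : ℕ) : ℤ := ⌊1 / gaussMap^[n - 1] x⌋

/-- The continuant `q_n(a_1, …, a_n)`, given by `q_{-1} = 0`, `q_0 = 1`,
`q_k = a_k q_{k-1} + q_{k-2}`. -/
def contQ : List ℕ → ℕ
  | [] => 1
  | [a] => a
  | a :: b :: l => a * contQ (b :: l) + contQ l

/-- `q_n(a_1,…,a_n)` for a tuple of positive integers. -/
def qTuple {n : ℕ} (f : Fin n → ℕ+) : ℕ := contQ (List.ofFn fun i => (f i : ℕ))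

/-- The condition `limsup_{n→∞} (1/n)·log S_n ≤ 0`, the logarithm taken in `[0,∞]`. -/
def PressureNonpos (S : ℕ → ℝ≥0∞) : Prop :=
  Filter.limsup (fun n : ℕ => (((n : ℝ)⁻¹ : ℝ) : EReal) * ENNReal.log (S n)) Filter.atTop ≤ 0

/-- `s₀(B)`. -/
def s0 (B : ℝ) : ℝ :=
  sInf {s : ℝ | 0 ≤ s ∧ PressureNonpos fun n =>
    ∑' f : Fin n → ℕ+, (ENNReal.ofReal (B ^ (s * n)) * (qTuple f : ℝ≥0∞) ^ 2) ^ (-s)}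

/-- `s_B`. -/
def sB (B : ℝ) : ℝ :=
  sInf {s : ℝ | 0 ≤ s ∧ PressureNonpos fun n =>
    ∑' f : Fin n → ℕ+, (ENNReal.ofReal (B ^ (n : ℝ)) * (qTuple f : ℝ≥0∞) ^ 2) ^ (-s)}

/-- `g_{B₁,B₂}`. -/
def gB (B₁ B₂ : ℝ) : ℝ :=
  sInf {s : ℝ | 0 ≤ s ∧ PressureNonpos fun n =>
    ∑' f : Fin n → ℕ+, ENNReal.ofReal (B₂ ^ ((1 - s) * n)) *
      (ENNReal.ofReal (B₁ ^ (n : ℝ)) * (qTuple f : ℝ≥0∞) ^ 2) ^ (-s)}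

/-- The set `F(Φ₁, Φ₂)`. -/
def FSet (Φ₁ Φ₂ : ℕ → ℝ) : Set ℝ :=
  {x | Irrational x ∧ x ∈ Set.Ioo (0 : ℝ) 1 ∧
    (∃ᶠ n in atTop, Φ₁ n ≤ ((pq x n * pq x (n + 1) : ℤ) : ℝ)) ∧
    (∀ᶠ n in atTop, ((pq x (n + 1) : ℤ) : ℝ) < Φ₂ n)}

lemma gauss_step {x : ℝ} (hx : Irrational x) (h : x ∈ Set.Ioo (0 : ℝ) 1) :
    Irrational (gaussMap x) ∧ gaussMap x ∈ Set.Ioo (0 : ℝ) 1 := by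
  have hne : x ≠ 0 := ne_of_gt h.1
  have hinv : Irrational (1 / x) := by
    rw [one_div]
    exact Irrational.of_inv (by rwa [inv_inv])
  have hfr : Irrational (gaussMap x) := by
    unfold gaussMap Int.fract
    exact hinv.sub_intCast _
  refine ⟨hfr, ⟨?_, ?_⟩⟩
  · exact lt_of_le_of_ne (Int.fract_nonneg _) (Ne.symm hfr.ne_zero)
  · exact Int.fract_lt_one _

lemma gauss_iter {x : ℝ} (hx : Irrational x) (h : x ∈ Set.Ioo (0 : ℝ) 1) (k : ℕ) :
    Irrational (gaussMap^[k] x) ∧ gaussMap^[k] x ∈ Set.Ioo (0 : ℝ) 1 := by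
  induction k with
  | zero => exact ⟨hx, h⟩
  | succ k ih =>
    rw [Function.iterate_succ_apply']
    exact gauss_step ih.1 ih.2

lemma pq_ge_one {x : ℝ} (hx : Irrational x) (h : x ∈ Set.Ioo (0 : ℝ) 1) (n : ℕ) :
    (1 : ℤ) ≤ pq x n := by
  obtain ⟨-, hy0, hy1⟩ := gauss_iter hx h (n - 1)
  rw [pq, Int.le_floor]
  push_cast
  exact one_le_one_div hy0 hy1.le

theorem statement2 (Φ₁ Φ₂ : ℕ → ℝ) (hpos₁ : ∀ n, 0 < Φ₁ n) (hpos₂ : ∀ n, 0 < Φ₂ n)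
    (htend₁ : Tendsto Φ₁ atTop atTop) (htend₂ : Tendsto Φ₂ atTop atTop)
    (B₂ : ℝ) (hB₂ : 1 ≤ B₂)
    (hlim : Tendsto (fun n : ℕ => Real.log (Φ₂ n) / n) atTop (nhds (Real.log B₂)))
    (hliminf : ((2 * Real.log B₂ : ℝ) : EReal) <
      liminf (fun n : ℕ => ((Real.log (Φ₁ n) / n : ℝ) : EReal)) atTop) :
    FSet Φ₁ Φ₂ = ∅ := by
  rw [Set.eq_empty_iff_forall_notMem]
  rintro x ⟨hirr, hx01, hfreq, hev⟩
  set L := Real.log B₂ with hL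
  -- Step A : eventual product bound
  obtain ⟨N, hN⟩ := eventually_atTop.mp hev
  have hA : ∀ᶠ n in atTop, ((pq x n * pq x (n + 1) : ℤ) : ℝ) < Φ₂ (n - 1) * Φ₂ n := by
    filter_upwards [eventually_ge_atTop (N + 1)] with n hn
    have h1 : ((pq x (n + 1) : ℤ) : ℝ) < Φ₂ n := hN n (le_trans (Nat.le_succ N) hn)
    have h2 : ((pq x n : ℤ) : ℝ) < Φ₂ (n - 1) := by
      have := hN (n - 1) (by omega)
      rwa [Nat.sub_add_cancel (by omega : 1 ≤ n)] at this
    have hp1 : (0 : ℝ) ≤ ((pq x n : ℤ) : ℝ) := by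
      exact_mod_cast le_trans zero_le_one (pq_ge_one hirr hx01 n)
    have hp2 : (0 : ℝ) ≤ ((pq x (n + 1) : ℤ) : ℝ) := by
      exact_mod_cast le_trans zero_le_one (pq_ge_one hirr hx01 (n + 1))
    push_cast
    exact mul_lt_mul'' h2 h1 hp1 hp2
  -- Step B : frequently log bound
  have hB : ∃ᶠ n in atTop,
      Real.log (Φ₁ n) / n ≤ Real.log (Φ₂ (n - 1)) / n + Real.log (Φ₂ n) / n := by
    refine ((hfreq.and_eventually hA).and_eventually (eventually_ge_atTop 1)).mono ?_
    rintro n ⟨⟨hle, hlt⟩, hn1⟩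
    have hlog : Real.log (Φ₁ n) ≤ Real.log (Φ₂ (n - 1)) + Real.log (Φ₂ n) := by
      rw [← Real.log_mul (hpos₂ _).ne' (hpos₂ _).ne']
      exact Real.log_le_log (hpos₁ n) (le_of_lt (lt_of_le_of_lt hle hlt))
    rw [← add_div]
    have hnp : (0 : ℝ) < n := by exact_mod_cast hn1
    gcongr
  -- Step C : limit of the RHS
  have h2 : Tendsto (fun n : ℕ => Real.log (Φ₂ (n - 1)) / n) atTop (nhds L) := by
    have h2a : Tendsto (fun n : ℕ => Real.log (Φ₂ (n - 1)) / ((n - 1 : ℕ) : ℝ)) atTop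
        (nhds L) := hlim.comp (tendsto_sub_atTop_nat 1)
    have h2b : Tendsto (fun n : ℕ => ((n - 1 : ℕ) : ℝ) / n) atTop (nhds 1) := by
      have : Tendsto (fun n : ℕ => 1 - 1 / (n : ℝ)) atTop (nhds (1 - 0)) :=
        tendsto_const_nhds.sub (tendsto_one_div_atTop_nhds_zero_nat)
      rw [sub_zero] at this
      refine this.congr' ?_
      filter_upwards [eventually_ge_atTop 1] with n hn
      have hnp : (0 : ℝ) < n := by exact_mod_cast hn
      rw [Nat.cast_sub hn, Nat.cast_one]
      field_simp
    have := h2a.mul h2b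
    rw [mul_one] at this
    refine this.congr' ?_
    filter_upwards [eventually_ge_atTop 2] with n hn
    have hne : ((n - 1 : ℕ) : ℝ) ≠ 0 := by
      have : 1 ≤ n - 1 := by omega
      positivity
    rw [div_mul_div_comm, mul_comm (Real.log _), mul_div_mul_left _ _ hne]
  have hC : Tendsto (fun n : ℕ => Real.log (Φ₂ (n - 1)) / n + Real.log (Φ₂ n) / n) atTop
      (nhds (2 * L)) := by
    have := h2.add hlim
    rwa [show L + L = 2 * L by ring] at this
  -- Step D : pick c between 2L and liminf
  obtain ⟨c, hc1, hc2⟩ := EReal.exists_between_coe_real hliminf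
  have hD : ∀ᶠ n in atTop, c < Real.log (Φ₁ n) / n := by
    have := eventually_lt_of_lt_liminf hc2
    filter_upwards [this] with n hn
    exact_mod_cast hn
  have hc1' : 2 * L < c := by exact_mod_cast hc1
  have hE : ∀ᶠ n in atTop,
      Real.log (Φ₂ (n - 1)) / n + Real.log (Φ₂ n) / n < c := hC.eventually_lt_const hc1'
  obtain ⟨n, ⟨hb, hd⟩, he⟩ := ((hB.and_eventually hD).and_eventually hE).exists
  linarith


end
end

section
/- Let Φ₁,Φ₂:ℕ→(0,∞) be functions tending to infinity. Suppose liminf_{n→∞} (log Φ₁(n))/n = +∞ and (log Φ₂(n))/n → +∞, that (log log Φ₂(n))/n converges as n→∞ to log b₂ with 1 ≤ b₂ < ∞, and that liminf_{n→∞} (log log Φ₁(n))/n > log b₂ (the liminf possibly being +∞). Then F(Φ₁,Φ₂) = ∅. -/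
open Filter MeasureTheory Set
open scoped ENNReal NNReal

noncomputable section

theorem statement4 (Φ₁ Φ₂ : ℕ → ℝ) (hpos₁ : ∀ n, 0 < Φ₁ n) (hpos₂ : ∀ n, 0 < Φ₂ n)
    (htend₁ : Tendsto Φ₁ atTop atTop) (htend₂ : Tendsto Φ₂ atTop atTop)
    (hB₁ : liminf (fun n : ℕ => ((Real.log (Φ₁ n) / n : ℝ) : EReal)) atTop = ⊤)
    (hB₂ : Tendsto (fun n : ℕ => Real.log (Φ₂ n) / n) atTop atTop)
    (b₂ : ℝ) (hb₂ : 1 ≤ b₂)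
    (hlim : Tendsto (fun n : ℕ => Real.log (Real.log (Φ₂ n)) / n) atTop (nhds (Real.log b₂)))
    (hliminf : ((Real.log b₂ : ℝ) : EReal) <
      liminf (fun n : ℕ => ((Real.log (Real.log (Φ₁ n)) / n : ℝ) : EReal)) atTop) :
    FSet Φ₁ Φ₂ = ∅ := by
  rw [Set.eq_empty_iff_forall_notMem]
  rintro x ⟨hirr, hmem, hfreq, hev⟩
  -- the iterates of the Gauss map stay irrational in (0,1)
  have hiter : ∀ k, Irrational (gaussMap^[k] x) ∧ gaussMap^[k] x ∈ Set.Ioo (0 : ℝ) 1 := by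
    intro k
    induction k with
    | zero => exact ⟨hirr, hmem⟩
    | succ k ih =>
      rw [Function.iterate_succ_apply']
      obtain ⟨h, _⟩ := ih
      have h1 : Irrational (1 / gaussMap^[k] x) := by simpa [one_div] using h.inv
      have h2 : Irrational (gaussMap (gaussMap^[k] x)) := by
        rw [gaussMap, Int.fract]; exact h1.sub_intCast _
      exact ⟨h2, lt_of_le_of_ne (Int.fract_nonneg _) (Ne.symm h2.ne_zero),
        Int.fract_lt_one _⟩
  -- partial quotients are at least 1
  have hpq : ∀ n, (1 : ℝ) ≤ ((pq x n : ℤ) : ℝ) := by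
    intro n
    obtain ⟨-, hy0, hy1⟩ := hiter (n - 1)
    have h1 : (1 : ℤ) ≤ pq x n := by
      rw [pq]
      refine Int.le_floor.mpr ?_
      rw [Int.cast_one]
      rw [le_div_iff₀ hy0]
      linarith
    exact_mod_cast h1
  set f : ℕ → ℝ := fun n => Real.log (Real.log (Φ₁ n)) / n with hf
  set h2 : ℕ → ℝ := fun m => Real.log (Real.log (Φ₂ m)) / m with hh2
  set G : ℕ → ℝ := fun n => Real.log 2 / n + max (h2 (n - 1)) (h2 n) with hG
  have hGtend : Tendsto G atTop (nhds (Real.log b₂)) := by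
    have h0 : Tendsto (fun n : ℕ => Real.log 2 / n) atTop (nhds 0) :=
      tendsto_const_div_atTop_nhds_zero_nat _
    have hmax : Tendsto (fun n : ℕ => max (h2 (n - 1)) (h2 n)) atTop
        (nhds (max (Real.log b₂) (Real.log b₂))) :=
      Tendsto.max (hlim.comp (tendsto_sub_atTop_nat 1)) hlim
    rw [max_self] at hmax
    simpa using h0.add hmax
  obtain ⟨c, hc1, hc2⟩ := EReal.exists_between_coe_real hliminf
  have hevc : ∀ᶠ n in atTop, (c : EReal) <
      ((Real.log (Real.log (Φ₁ n)) / n : ℝ) : EReal) := eventually_lt_of_lt_liminf hc2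
  have hevc' : ∀ᶠ n in atTop, c < f n := hevc.mono fun n h => by exact_mod_cast h
  have hGc : ∀ᶠ n in atTop, G n < c :=
    hGtend.eventually_lt_const (by exact_mod_cast hc1)
  -- eventual bound for `pq x n`
  have hev2 : ∀ᶠ n in atTop, ((pq x n : ℤ) : ℝ) < Φ₂ (n - 1) := by
    obtain ⟨N, hN⟩ := eventually_atTop.mp hev
    refine eventually_atTop.mpr ⟨N + 1, fun n hn => ?_⟩
    have h := hN (n - 1) (by omega)
    rwa [Nat.sub_add_cancel (by omega)] at h
  have hlog₂ : ∀ᶠ n in atTop, 1 ≤ Real.log (Φ₂ n) := by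
    filter_upwards [htend₂.eventually_ge_atTop (Real.exp 1)] with n hn
    exact (Real.le_log_iff_exp_le (hpos₂ n)).mpr hn
  have hlog₂' : ∀ᶠ n in atTop, 1 ≤ Real.log (Φ₂ (n - 1)) :=
    (tendsto_sub_atTop_nat 1).eventually hlog₂
  have hlog₁ : ∀ᶠ n in atTop, 1 ≤ Real.log (Φ₁ n) := by
    filter_upwards [htend₁.eventually_ge_atTop (Real.exp 1)] with n hn
    exact (Real.le_log_iff_exp_le (hpos₁ n)).mpr hn
  -- key frequently estimate
  have key : ∃ᶠ n in atTop, f n ≤ G n := by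
    refine (hfreq.and_eventually
      (hev.and (hev2.and (hlog₂.and (hlog₂'.and (hlog₁.and (eventually_ge_atTop 2))))))).mono ?_
    rintro n ⟨h1, hA, hB, hl2, hl2', hl1, hn2⟩
    set A := Real.log (Φ₂ (n - 1)) with hAdef
    set B := Real.log (Φ₂ n) with hBdef
    have hα : (1 : ℝ) ≤ ((pq x n : ℤ) : ℝ) := hpq n
    have hβ : (1 : ℝ) ≤ ((pq x (n + 1) : ℤ) : ℝ) := hpq (n + 1)
    have hprod : Φ₁ n ≤ Φ₂ (n - 1) * Φ₂ n := by
      have hlt : ((pq x n * pq x (n + 1) : ℤ) : ℝ) < Φ₂ (n - 1) * Φ₂ n := by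
        push_cast
        exact mul_lt_mul'' hB hA (by linarith) (by linarith)
      have := h1
      push_cast at this hlt ⊢
      nlinarith [hpq n, hpq (n + 1)]
    have hlogΦ : Real.log (Φ₁ n) ≤ A + B := by
      calc Real.log (Φ₁ n) ≤ Real.log (Φ₂ (n - 1) * Φ₂ n) :=
            Real.log_le_log (hpos₁ n) hprod
        _ = A + B := Real.log_mul (hpos₂ _).ne' (hpos₂ _).ne'
    have hAB : Real.log (Φ₁ n) ≤ 2 * max A B := by
      rcases le_total A B with h | h
      · rw [max_eq_right h]; linarith
      · rw [max_eq_left h]; linarith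
    have hmaxpos : (0 : ℝ) < max A B := lt_of_lt_of_le one_pos (le_trans hl2 (le_max_right A B))
    have hloglog : Real.log (Real.log (Φ₁ n)) ≤
        Real.log 2 + max (Real.log A) (Real.log B) := by
      calc Real.log (Real.log (Φ₁ n)) ≤ Real.log (2 * max A B) :=
            Real.log_le_log (by linarith) hAB
        _ = Real.log 2 + Real.log (max A B) := Real.log_mul two_ne_zero hmaxpos.ne'
        _ = Real.log 2 + max (Real.log A) (Real.log B) := by
            rcases le_total A B with h | h
            · rw [max_eq_right h, max_eq_right (Real.log_le_log (by linarith) h)]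
            · rw [max_eq_left h, max_eq_left (Real.log_le_log (by linarith) h)]
    have hnpos : (0 : ℝ) < (n : ℝ) := by
      have : (0 : ℕ) < n := by omega
      exact_mod_cast this
    have hn1pos : (0 : ℝ) < ((n - 1 : ℕ) : ℝ) := by
      have : (0 : ℕ) < n - 1 := by omega
      exact_mod_cast this
    have hn1le : ((n - 1 : ℕ) : ℝ) ≤ (n : ℝ) := by exact_mod_cast Nat.sub_le n 1
    have step1 : f n ≤ Real.log 2 / n + max (Real.log A) (Real.log B) / n := by
      rw [hf, ← add_div]
      exact div_le_div_of_nonneg_right hloglog hnpos.le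
    have step2 : max (Real.log A) (Real.log B) / n ≤ max (h2 (n - 1)) (h2 n) := by
      rw [← max_div_div_right hnpos.le]
      refine max_le_max ?_ le_rfl
      exact div_le_div_of_nonneg_left (Real.log_nonneg hl2') hn1pos hn1le
    calc f n ≤ Real.log 2 / n + max (Real.log A) (Real.log B) / n := step1
      _ ≤ Real.log 2 / n + max (h2 (n - 1)) (h2 n) := by linarith
      _ = G n := rfl
  obtain ⟨n, hfn, hGn, hcn⟩ := (key.and_eventually (hGc.and hevc')).exists
  linarith

end
end

section
/- Let Φ₁,Φ₂:ℕ→(0,∞) be functions tending to infinity. Suppose liminf_{n→∞} (log log Φ₁(n))/n = +∞ and (log log Φ₂(n))/n → +∞. Then dim_H F(Φ₁,Φ₂) = 0; in particular, F(Φ₁,Φ₂) is either empty or has Hausdorff dimension zero. -/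
open Filter MeasureTheory Set
open scoped ENNReal NNReal
open scoped Topology

noncomputable section

namespace Statement5Aux

def dgt (j : ℕ) (x : ℝ) : ℤ := ⌊1 / gaussMap^[j] x⌋

lemma gaussMap_mem {x : ℝ} (hx : Irrational x) :
    Irrational (gaussMap x) ∧ 0 < gaussMap x ∧ gaussMap x < 1 := by
  have hinv : Irrational (1 / x) := by simpa [one_div] using hx.inv
  have hirr : Irrational (gaussMap x) := by
    rw [gaussMap, Int.fract]
    exact Irrational.sub_intCast hinv _
  exact ⟨hirr, lt_of_le_of_ne (Int.fract_nonneg _) (Ne.symm hirr.ne_zero),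
    Int.fract_lt_one _⟩

lemma iter_mem {x : ℝ} (hx : Irrational x) (h0 : 0 < x) (h1 : x < 1) :
    ∀ j : ℕ, Irrational (gaussMap^[j] x) ∧ 0 < gaussMap^[j] x ∧ gaussMap^[j] x < 1 := by
  intro j
  induction j with
  | zero => exact ⟨hx, h0, h1⟩
  | succ j ih =>
    rw [Function.iterate_succ_apply']
    exact gaussMap_mem ih.1

lemma dgt_one_le {x : ℝ} (hx : Irrational x) (h0 : 0 < x) (h1 : x < 1) (j : ℕ) :
    1 ≤ dgt j x := by
  obtain ⟨hui, hu0, hu1⟩ := iter_mem hx h0 h1 j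
  rw [dgt, Int.le_floor]
  push_cast
  rw [le_div_iff₀ hu0, one_mul]
  exact hu1.le

lemma inv_eq (u : ℝ) : ((⌊1 / u⌋ : ℝ)) + gaussMap u = 1 / u := by
  rw [gaussMap]
  exact Int.floor_add_fract _

lemma inv_eq' (u : ℝ) : 1 / u = (dgt 0 u : ℝ) + gaussMap u := by
  rw [dgt]
  simp only [Function.iterate_zero_apply]
  rw [inv_eq u]

lemma keyDiam : ∀ (k : ℕ) (K : ℝ), 0 < K → ∀ x y : ℝ, Irrational x → 0 < x → x < 1 →
    Irrational y → 0 < y → y < 1 → (∀ j, j < k → dgt j x = dgt j y) →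
    K ≤ (dgt k x : ℝ) → K ≤ (dgt k y : ℝ) → |x - y| ≤ 1 / K := by
  intro k
  induction k with
  | zero =>
    intro K hK x y _ hx0 _ _ hy0 _ _ hKx hKy
    have hfx : (dgt 0 x : ℝ) ≤ 1 / x := by
      simpa [dgt] using Int.floor_le (1 / x)
    have hfy : (dgt 0 y : ℝ) ≤ 1 / y := by
      simpa [dgt] using Int.floor_le (1 / y)
    have hx' : x ≤ 1 / K := by
      rw [le_div_iff₀ hK]
      have h1 : K ≤ 1 / x := le_trans hKx hfx
      rw [le_div_iff₀ hx0] at h1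
      linarith [h1]
    have hy' : y ≤ 1 / K := by
      rw [le_div_iff₀ hK]
      have h1 : K ≤ 1 / y := le_trans hKy hfy
      rw [le_div_iff₀ hy0] at h1
      linarith [h1]
    rw [abs_sub_le_iff]
    constructor <;> linarith
  | succ k ih =>
    intro K hK x y hxi hx0 hx1 hyi hy0 hy1 hdig hKx hKy
    obtain ⟨hui, hu0, hu1⟩ := gaussMap_mem hxi
    obtain ⟨hvi, hv0, hv1⟩ := gaussMap_mem hyi
    set u := gaussMap x with hu
    set v := gaussMap y with hv
    have hshiftx : ∀ j : ℕ, dgt j u = dgt (j + 1) x := by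
      intro j; rw [dgt, dgt, Function.iterate_succ_apply]
    have hshifty : ∀ j : ℕ, dgt j v = dgt (j + 1) y := by
      intro j; rw [dgt, dgt, Function.iterate_succ_apply]
    have huv : |u - v| ≤ 1 / K := by
      refine ih K hK u v hui hu0 hu1 hvi hv0 hv1 (fun j hj => ?_) ?_ ?_
      · rw [hshiftx, hshifty]; exact hdig (j + 1) (by omega)
      · rw [hshiftx]; exact hKx
      · rw [hshifty]; exact hKy
    have ha1 : (1 : ℝ) ≤ (dgt 0 x : ℝ) := by
      exact_mod_cast dgt_one_le hxi hx0 hx1 0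
    have hd0 : dgt 0 x = dgt 0 y := hdig 0 (Nat.succ_pos _)
    set a : ℝ := (dgt 0 x : ℝ) with hadef
    have hxeq : 1 / x = a + u := inv_eq' x
    have hyeq : 1 / y = a + v := by
      rw [inv_eq' y, hadef, hd0]
    have hau : (0:ℝ) < a + u := by linarith
    have hav : (0:ℝ) < a + v := by linarith
    have hxval : x = (a + u)⁻¹ := by
      rw [← hxeq, one_div, inv_inv]
    have hyval : y = (a + v)⁻¹ := by
      rw [← hyeq, one_div, inv_inv]
    have hdiff : x - y = (v - u) / ((a + u) * (a + v)) := by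
      rw [hxval, hyval]
      field_simp
      try ring
    have hD1 : (1:ℝ) ≤ (a + u) * (a + v) := by nlinarith
    calc |x - y| = |v - u| / |(a + u) * (a + v)| := by rw [hdiff, abs_div]
      _ = |v - u| / ((a + u) * (a + v)) := by
          rw [abs_of_pos (show (0:ℝ) < (a + u) * (a + v) from by nlinarith)]
      _ ≤ |v - u| := div_le_self (abs_nonneg _) hD1
      _ = |u - v| := abs_sub_comm _ _
      _ ≤ 1 / K := huv

def cyl (k : ℕ) (f : Fin k → ℕ) (K : ℝ) : Set ℝ :=
  {x | Irrational x ∧ 0 < x ∧ x < 1 ∧ (∀ j : Fin k, dgt j x = f j) ∧ K ≤ (dgt k x : ℝ)}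

lemma diam_cyl {k : ℕ} {f : Fin k → ℕ} {K : ℝ} (hK : 0 < K) :
    EMetric.diam (cyl k f K) ≤ ENNReal.ofReal (1 / K) := by
  refine EMetric.diam_le fun x hx y hy => ?_
  obtain ⟨hxi, hx0, hx1, hxd, hxK⟩ := hx
  obtain ⟨hyi, hy0, hy1, hyd, hyK⟩ := hy
  rw [edist_dist, Real.dist_eq]
  refine ENNReal.ofReal_le_ofReal ?_
  exact keyDiam k K hK x y hxi hx0 hx1 hyi hy0 hy1
    (fun j hj => ((hxd ⟨j, hj⟩).trans (hyd ⟨j, hj⟩).symm)) hxK hyK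

lemma hm_zero (Ψ : ℕ → ℝ)
    (hgrow : ∀ c : ℝ, ∀ᶠ m : ℕ in atTop, Real.exp (Real.exp (c * (m:ℝ))) ≤ Ψ m)
    (s : ℝ) (hs : 0 < s) :
    μH[s] {x : ℝ | Irrational x ∧ 0 < x ∧ x < 1 ∧
      ∃ᶠ m in atTop, 1 ≤ m ∧ Ψ m ≤ (dgt (m - 1) x : ℝ)} = 0 := by
  classical
  set E := {x : ℝ | Irrational x ∧ 0 < x ∧ x < 1 ∧
      ∃ᶠ m in atTop, 1 ≤ m ∧ Ψ m ≤ (dgt (m - 1) x : ℝ)} with hE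
  set ρ : ℝ := 1 + 2 / s with hρdef
  have hρ1 : (1:ℝ) < ρ := by
    have := div_pos two_pos hs; rw [hρdef]; linarith
  have hρ0 : (0:ℝ) < ρ := by linarith
  have hgeo : ∀ k : ℕ, ∑ j ∈ Finset.range k, ρ ^ (j+1) ≤ s / 2 * ρ ^ (k+1) := by
    intro k
    induction k with
    | zero => simp; positivity
    | succ k ih =>
      rw [Finset.sum_range_succ]
      have hkey : s / 2 * ρ = s / 2 + 1 := by
        rw [hρdef]; field_simp
      have h2 : s / 2 * ρ ^ (k+1+1) = (s/2 + 1) * ρ^(k+1) := by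
        rw [← hkey]; ring
      rw [h2]
      nlinarith [pow_pos hρ0 (k+1)]
  have hbern : ∀ k : ℕ, ((k:ℝ) + 1) ≤ s / 2 * ρ ^ (k+1) := by
    intro k
    have h := one_add_mul_le_pow (a := ρ - 1) (by linarith) (k+1)
    have hρs : ρ - 1 = 2 / s := by rw [hρdef]; ring
    rw [hρs] at h
    push_cast at h
    have h2 : ((k:ℝ)+1) * (2/s) ≤ ρ^(k+1) := by nlinarith
    have h3 : s/2 * (((k:ℝ)+1) * (2/s)) ≤ s/2 * ρ^(k+1) :=
      mul_le_mul_of_nonneg_left h2 (by positivity)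
    calc ((k:ℝ)+1) = s/2 * (((k:ℝ)+1) * (2/s)) := by field_simp
      _ ≤ s/2 * ρ^(k+1) := h3
  set c : ℝ := Real.log (2 * ρ) + 1 with hcdef
  have h2ρ : (1:ℝ) < 2 * ρ := by linarith
  have hc1 : 1 ≤ c := by
    have := Real.log_pos h2ρ; rw [hcdef]; linarith
  have hec : 2 * ρ ≤ Real.exp c := by
    rw [hcdef, Real.exp_add, Real.exp_log (by linarith)]
    nlinarith [Real.add_one_le_exp (1:ℝ)]
  have claim : ∀ ε r₀ : ℝ, 0 < ε → 0 < r₀ →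
      ∃ t : (Bool × Σ k : ℕ, (Fin k → ℕ)) → Set ℝ,
      (E ⊆ ⋃ i, t i) ∧ (∀ i, EMetric.diam (t i) ≤ ENNReal.ofReal r₀) ∧
      (∑' i, EMetric.diam (t i) ^ s ≤ ENNReal.ofReal ε) := by
    intro ε r₀ hε hr₀
    obtain ⟨L, hL0, hLr, hLhalf, hLε⟩ :
        ∃ L : ℝ, 0 ≤ L ∧ Real.exp (-L) ≤ r₀ ∧ Real.exp (-L) ≤ 1/2 ∧ Real.exp (-L) ≤ ε/4 := by
      have h := Real.tendsto_exp_neg_atTop_nhds_zero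
      obtain ⟨L, hL⟩ := ((eventually_ge_atTop (0:ℝ)).and ((h.eventually_lt_const hr₀).and
        ((h.eventually_lt_const (by linarith : (0:ℝ) < 1/2)).and
          (h.eventually_lt_const (by positivity : (0:ℝ) < ε/4))))).exists
      exact ⟨L, hL.1, hL.2.1.le, hL.2.2.1.le, hL.2.2.2.le⟩
    set A : ℕ → ℝ := fun i => Real.exp (L * ρ ^ i) with hAdef
    have hA0 : ∀ i, (0:ℝ) < A i := fun i => Real.exp_pos _
    obtain ⟨N, hN⟩ : ∃ N : ℕ, ∀ m : ℕ, N ≤ m →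
        (Real.exp (Real.exp (c * (m:ℝ))) ≤ Ψ m) ∧ (L * ρ ^ m ≤ Real.exp (c * (m:ℝ))) ∧
        ((m:ℝ) ≤ s / 2 * Real.exp (c * (m:ℝ))) ∧ (Real.exp (-(m:ℝ)) ≤ r₀) ∧
        (Real.exp (-(m:ℝ)/2) * 3 ≤ ε/2) := by
      have e1 := hgrow c
      have e2 : ∀ᶠ m : ℕ in atTop, L * ρ ^ m ≤ Real.exp (c * (m:ℝ)) := by
        have hp : Tendsto (fun m : ℕ => (2:ℝ) ^ m) atTop atTop :=
          tendsto_pow_atTop_atTop_of_one_lt one_lt_two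
        filter_upwards [hp.eventually_ge_atTop L] with m hm
        calc L * ρ ^ m ≤ 2 ^ m * ρ ^ m :=
              mul_le_mul_of_nonneg_right hm (by positivity)
          _ = (2 * ρ) ^ m := (mul_pow _ _ _).symm
          _ ≤ Real.exp c ^ m := pow_le_pow_left₀ (by linarith) hec m
          _ = Real.exp (c * (m:ℝ)) := by rw [← Real.exp_nat_mul, mul_comm]
      have e3 : ∀ᶠ m : ℕ in atTop, (m:ℝ) ≤ s / 2 * Real.exp (c * (m:ℝ)) := by
        have hcm : Tendsto (fun m : ℕ => c * (m:ℝ)) atTop atTop :=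
          (tendsto_natCast_atTop_atTop (R := ℝ)).const_mul_atTop (by linarith)
        have hdiv := (Real.tendsto_exp_div_pow_atTop 1).comp hcm
        filter_upwards [hdiv.eventually_ge_atTop (2 / s), hcm.eventually_ge_atTop 1]
          with m h1 h2
        have hcm0 : (0:ℝ) < c * m := by linarith
        have h1' : 2 / s * (c * m) ≤ Real.exp (c * m) := by
          rw [← le_div_iff₀ hcm0]
          simpa [pow_one] using h1
        have hmc : (m:ℝ) ≤ c * m := le_mul_of_one_le_left (Nat.cast_nonneg m) hc1
        have hid : s/2 * (2/s * (c * (m:ℝ))) = c * m := by field_simp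
        have h4 : s/2 * (2/s * (c*(m:ℝ))) ≤ s/2 * Real.exp (c*(m:ℝ)) :=
          mul_le_mul_of_nonneg_left h1' (by positivity)
        rw [hid] at h4
        exact le_trans hmc h4
      have e4 : ∀ᶠ m : ℕ in atTop, Real.exp (-(m:ℝ)) ≤ r₀ := by
        have h : Tendsto (fun m : ℕ => Real.exp (-(m:ℝ))) atTop (𝓝 0) :=
          Real.tendsto_exp_neg_atTop_nhds_zero.comp tendsto_natCast_atTop_atTop
        exact (h.eventually_lt_const hr₀).mono fun m hm => hm.le
      have e5 : ∀ᶠ m : ℕ in atTop, Real.exp (-(m:ℝ)/2) * 3 ≤ ε/2 := by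
        have h1 : Tendsto (fun m : ℕ => (m:ℝ)/2) atTop atTop :=
          (tendsto_natCast_atTop_atTop (R := ℝ)).atTop_div_const two_pos
        have h2 : Tendsto (fun m : ℕ => Real.exp (-((m:ℝ)/2)) * 3) atTop (𝓝 (0 * 3)) :=
          (Real.tendsto_exp_neg_atTop_nhds_zero.comp h1).mul_const 3
        rw [zero_mul] at h2
        have h3 := h2.eventually_lt_const (by positivity : (0:ℝ) < ε/2)
        exact h3.mono fun m hm => by rw [neg_div]; exact hm.le
      obtain ⟨N, hN⟩ := eventually_atTop.1 ((e1.and (e2.and (e3.and (e4.and e5)))))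
      exact ⟨N, fun m hm => ⟨(hN m hm).1, (hN m hm).2.1, (hN m hm).2.2.1,
        (hN m hm).2.2.2.1, (hN m hm).2.2.2.2⟩⟩
    set tE : (Σ k : ℕ, (Fin k → ℕ)) → Set ℝ := fun p =>
      if (∀ j : Fin p.1, p.2 j ∈ Finset.Icc 1 ⌊A (j.1+1)⌋₊)
        then cyl p.1 p.2 (A (p.1+1)) else ∅ with htE
    set tJ : (Σ k : ℕ, (Fin k → ℕ)) → Set ℝ := fun p =>
      if (N ≤ p.1 + 1 ∧ ∀ j : Fin p.1, p.2 j ∈ Finset.Icc 1 ⌊A (j.1+1)⌋₊)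
        then cyl p.1 p.2 (Ψ (p.1+1)) else ∅ with htJ
    refine ⟨fun i => if i.1 then tJ i.2 else tE i.2, ?_, ?_, ?_⟩
    · -- coverage
      rintro x ⟨hxi, hx0, hx1, hfreq⟩
      obtain ⟨m, hmN, hm1, hmΨ⟩ : ∃ m : ℕ, N ≤ m ∧ 1 ≤ m ∧ Ψ m ≤ (dgt (m-1) x : ℝ) := by
        obtain ⟨m, hm, h1, h2⟩ := (frequently_atTop.1 hfreq) (max N 1)
        exact ⟨m, le_trans (le_max_left _ _) hm, h1, h2⟩
      set g : ℕ → ℕ := fun j => (dgt j x).toNat with hgdef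
      have hg : ∀ j, (g j : ℤ) = dgt j x := fun j =>
        Int.toNat_of_nonneg (by linarith [dgt_one_le hxi hx0 hx1 j])
      have hg1 : ∀ j, 1 ≤ g j := fun j => by
        have h1 := dgt_one_le hxi hx0 hx1 j
        have h2 := hg j
        omega
      have hgR : ∀ j, ((g j : ℕ) : ℝ) = ((dgt j x : ℤ) : ℝ) := fun j => by
        rw [← hg j]; push_cast; ring
      by_cases hcase : ∀ j, j < m - 1 → g j ≤ ⌊A (j+1)⌋₊
      · refine mem_iUnion.2 ⟨(true, ⟨m - 1, fun j => g j.1⟩), ?_⟩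
        show x ∈ tJ ⟨m - 1, fun j => g j.1⟩
        rw [htJ]
        dsimp only
        rw [if_pos ?cond]
        case cond =>
          exact ⟨by omega, fun j => Finset.mem_Icc.2 ⟨hg1 j.1, hcase j.1 j.2⟩⟩
        refine ⟨hxi, hx0, hx1, fun j => (hg j.1).symm, ?_⟩
        have hm' : (m - 1) + 1 = m := by omega
        rw [hm']
        exact hmΨ
      · push_neg at hcase
        have hex : ∃ j, j < m - 1 ∧ ⌊A (j+1)⌋₊ < g j := by
          obtain ⟨j, hj1, hj2⟩ := hcase
          exact ⟨j, hj1, by omega⟩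
        set j₀ := Nat.find hex with hj₀def
        obtain ⟨hj₀m, hj₀g⟩ := Nat.find_spec hex
        refine mem_iUnion.2 ⟨(false, ⟨j₀, fun j => g j.1⟩), ?_⟩
        show x ∈ tE ⟨j₀, fun j => g j.1⟩
        rw [htE]
        dsimp only
        rw [if_pos ?cond2]
        case cond2 =>
          intro j
          refine Finset.mem_Icc.2 ⟨hg1 j.1, ?_⟩
          have hmin := Nat.find_min hex j.2
          push_neg at hmin
          exact hmin (lt_trans j.2 hj₀m)
        refine ⟨hxi, hx0, hx1, fun j => (hg j.1).symm, ?_⟩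
        have h1 : A (j₀+1) < (⌊A (j₀+1)⌋₊ : ℝ) + 1 := Nat.lt_floor_add_one _
        have h2 : ((⌊A (j₀+1)⌋₊ : ℕ) : ℝ) + 1 ≤ ((g j₀ : ℕ) : ℝ) := by
          exact_mod_cast Nat.succ_le_of_lt hj₀g
        rw [← hgR j₀]
        linarith
    · -- diameters
      rintro ⟨b, k, f⟩
      have hE' : EMetric.diam (tE ⟨k, f⟩) ≤ ENNReal.ofReal r₀ := by
        rw [htE]
        dsimp only
        split_ifs with hcond
        · refine le_trans (diam_cyl (hA0 (k+1))) (ENNReal.ofReal_le_ofReal ?_)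
          have h1 : (1 : ℝ) ≤ ρ ^ (k+1) := by
            calc (1:ℝ) = 1 ^ (k+1) := (one_pow _).symm
              _ ≤ ρ ^ (k+1) := pow_le_pow_left₀ zero_le_one hρ1.le _
          have h2 : L ≤ L * ρ ^ (k+1) := le_mul_of_one_le_right hL0 h1
          calc 1 / A (k+1) = Real.exp (-(L * ρ^(k+1))) := by
                simp only [hAdef]
                rw [one_div, ← Real.exp_neg]
            _ ≤ Real.exp (-L) := Real.exp_le_exp.2 (by linarith)
            _ ≤ r₀ := hLr
        · exact Metric.ediam_empty.le.trans zero_le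
      have hJ' : EMetric.diam (tJ ⟨k, f⟩) ≤ ENNReal.ofReal r₀ := by
        rw [htJ]
        dsimp only
        split_ifs with hcond
        · obtain ⟨hNk, -⟩ := hcond
          obtain ⟨hg1', -, -, hg4', -⟩ := hN (k+1) hNk
          have hΨ0 : 0 < Ψ (k+1) := lt_of_lt_of_le (Real.exp_pos _) hg1'
          refine le_trans (diam_cyl hΨ0) (ENNReal.ofReal_le_ofReal ?_)
          have h2 : ((k+1:ℕ):ℝ) ≤ Real.exp (c * ((k+1:ℕ):ℝ)) := by
            have ha := Real.add_one_le_exp (c * ((k+1:ℕ):ℝ))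
            have hb : ((k+1:ℕ):ℝ) ≤ c * ((k+1:ℕ):ℝ) :=
              le_mul_of_one_le_left (by positivity) hc1
            linarith
          calc 1 / Ψ (k+1) ≤ 1 / Real.exp (Real.exp (c * ((k+1:ℕ):ℝ))) :=
                one_div_le_one_div_of_le (Real.exp_pos _) hg1'
            _ = Real.exp (-(Real.exp (c * ((k+1:ℕ):ℝ)))) := by rw [Real.exp_neg, one_div]
            _ ≤ Real.exp (-((k+1:ℕ):ℝ)) := Real.exp_le_exp.2 (by linarith)
            _ ≤ r₀ := hg4'
        · exact Metric.ediam_empty.le.trans zero_le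
      cases b
      · exact hE'
      · exact hJ'
    · -- sum
      have hcard : ∀ k : ℕ,
          (((Fintype.piFinset fun j : Fin k => Finset.Icc 1 ⌊A (j.1+1)⌋₊).card : ℕ) : ℝ≥0∞)
          ≤ ENNReal.ofReal (Real.exp (L * (s/2 * ρ^(k+1)))) := by
        intro k
        rw [← ENNReal.ofReal_natCast]
        refine ENNReal.ofReal_le_ofReal ?_
        rw [Fintype.card_piFinset]
        push_cast
        calc ∏ j : Fin k, ((Finset.Icc 1 ⌊A (j.1+1)⌋₊).card : ℝ)
            = ∏ j : Fin k, (⌊A (j.1+1)⌋₊ : ℝ) := by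
              refine Finset.prod_congr rfl fun j _ => ?_
              rw [Nat.card_Icc]
              norm_num
          _ ≤ ∏ j : Fin k, A (j.1+1) :=
              Finset.prod_le_prod (fun j _ => by positivity)
                (fun j _ => Nat.floor_le (hA0 _).le)
          _ = Real.exp (∑ j : Fin k, L * ρ^(j.1+1)) := by
              rw [Real.exp_sum]
          _ = Real.exp (L * ∑ j ∈ Finset.range k, ρ^(j+1)) := by
              rw [Finset.mul_sum, ← Fin.sum_univ_eq_sum_range (fun j => L * ρ^(j+1)) k]
          _ ≤ Real.exp (L * (s/2 * ρ^(k+1))) :=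
              Real.exp_le_exp.2 (mul_le_mul_of_nonneg_left (hgeo k) hL0)
      have htsum_f : ∀ (k : ℕ) (K : ℝ), 0 < K → ∀ (T : (Fin k → ℕ) → Set ℝ),
          (∀ f, T f = ∅ ∨ (f ∈ Fintype.piFinset (fun j : Fin k => Finset.Icc 1 ⌊A (j.1+1)⌋₊)
              ∧ T f = cyl k f K)) →
          (∑' f : Fin k → ℕ, EMetric.diam (T f) ^ s)
            ≤ ENNReal.ofReal (Real.exp (L * (s/2 * ρ^(k+1))) * (1/K)^s) := by
        intro k K hK T hT
        have hW : ∀ f : Fin k → ℕ, EMetric.diam (T f) ^ s ≤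
            (if f ∈ Fintype.piFinset (fun j : Fin k => Finset.Icc 1 ⌊A (j.1+1)⌋₊)
              then ENNReal.ofReal ((1/K)^s) else 0) := by
          intro f
          rcases hT f with h | ⟨hmem, h⟩
          · rw [h, show EMetric.diam (∅ : Set ℝ) = 0 from Metric.ediam_empty, ENNReal.zero_rpow_of_pos hs]
            exact zero_le
          · rw [h, if_pos hmem]
            refine le_trans (ENNReal.rpow_le_rpow (diam_cyl hK) hs.le) ?_
            rw [← ENNReal.ofReal_rpow_of_pos (by positivity)]
        refine le_trans (Summable.tsum_le_tsum hW ENNReal.summable ENNReal.summable) ?_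
        rw [tsum_eq_sum (s := Fintype.piFinset fun j : Fin k => Finset.Icc 1 ⌊A (j.1+1)⌋₊)
          (fun f hf => if_neg hf)]
        calc ∑ f ∈ Fintype.piFinset (fun j : Fin k => Finset.Icc 1 ⌊A (j.1+1)⌋₊),
              (if f ∈ Fintype.piFinset (fun j : Fin k => Finset.Icc 1 ⌊A (j.1+1)⌋₊)
                then ENNReal.ofReal ((1/K)^s) else 0)
            = ∑ _f ∈ Fintype.piFinset (fun j : Fin k => Finset.Icc 1 ⌊A (j.1+1)⌋₊),
              ENNReal.ofReal ((1/K)^s) :=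
              Finset.sum_congr rfl fun f hf => if_pos hf
          _ = ((Fintype.piFinset fun j : Fin k => Finset.Icc 1 ⌊A (j.1+1)⌋₊).card : ℕ)
              • ENNReal.ofReal ((1/K)^s) := Finset.sum_const _
          _ = (((Fintype.piFinset fun j : Fin k => Finset.Icc 1 ⌊A (j.1+1)⌋₊).card : ℕ) : ℝ≥0∞)
              * ENNReal.ofReal ((1/K)^s) := nsmul_eq_mul _ _
          _ ≤ ENNReal.ofReal (Real.exp (L * (s/2 * ρ^(k+1)))) * ENNReal.ofReal ((1/K)^s) :=
              mul_le_mul_left (hcard k) _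
          _ = ENNReal.ofReal (Real.exp (L * (s/2 * ρ^(k+1))) * (1/K)^s) :=
              (ENNReal.ofReal_mul (Real.exp_nonneg _)).symm
      have hrealE : ∀ k : ℕ, Real.exp (L * (s/2 * ρ^(k+1))) * ((1:ℝ)/A (k+1))^s
          ≤ Real.exp (-L) ^ (k+1) := by
        intro k
        have h1 : ((1:ℝ) / A (k+1)) = Real.exp (-(L * ρ^(k+1))) := by
          simp only [hAdef]
          rw [one_div, ← Real.exp_neg]
        rw [h1, Real.rpow_def_of_pos (Real.exp_pos _), Real.log_exp, ← Real.exp_add,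
          ← Real.exp_nat_mul]
        refine Real.exp_le_exp.2 ?_
        have h3 := hbern k
        have h4 := mul_le_mul_of_nonneg_left h3 hL0
        push_cast
        nlinarith
      have hrealJ : ∀ k : ℕ, N ≤ k + 1 →
          Real.exp (L * (s/2 * ρ^(k+1))) * ((1:ℝ)/Ψ (k+1))^s
          ≤ Real.exp (-(N:ℝ)/2) * Real.exp (-(1:ℝ)/2) ^ (k+1) := by
        intro k hNk
        obtain ⟨hg1', hg2', hg3', -, -⟩ := hN (k+1) hNk
        have hΨ0 : 0 < Ψ (k+1) := lt_of_lt_of_le (Real.exp_pos _) hg1'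
        have h1 : ((1:ℝ)/Ψ (k+1)) ≤ Real.exp (-(Real.exp (c * ((k+1:ℕ):ℝ)))) := by
          rw [Real.exp_neg, ← one_div]
          exact one_div_le_one_div_of_le (Real.exp_pos _) hg1'
        have h2 : ((1:ℝ)/Ψ (k+1))^s ≤ Real.exp (-(Real.exp (c * ((k+1:ℕ):ℝ))) * s) := by
          calc ((1:ℝ)/Ψ (k+1))^s ≤ (Real.exp (-(Real.exp (c * ((k+1:ℕ):ℝ)))))^s :=
                Real.rpow_le_rpow (by positivity) h1 hs.le
            _ = Real.exp (-(Real.exp (c * ((k+1:ℕ):ℝ))) * s) := by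
                rw [Real.rpow_def_of_pos (Real.exp_pos _), Real.log_exp]
        calc Real.exp (L * (s/2 * ρ^(k+1))) * ((1:ℝ)/Ψ (k+1))^s
            ≤ Real.exp (L * (s/2 * ρ^(k+1))) * Real.exp (-(Real.exp (c * ((k+1:ℕ):ℝ))) * s) :=
              mul_le_mul_of_nonneg_left h2 (Real.exp_nonneg _)
          _ = Real.exp (L * (s/2 * ρ^(k+1)) + (-(Real.exp (c * ((k+1:ℕ):ℝ))) * s)) := by
              rw [← Real.exp_add]
          _ ≤ Real.exp (-(N:ℝ)/2 + ((k+1:ℕ):ℝ) * (-(1:ℝ)/2)) := by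
              refine Real.exp_le_exp.2 ?_
              have h4 := mul_le_mul_of_nonneg_left hg2' (by positivity : (0:ℝ) ≤ s/2)
              have h5 : ((k:ℝ)+1) ≤ s/2 * Real.exp (c * ((k+1:ℕ):ℝ)) := by
                push_cast at hg3' ⊢
                linarith
              have h6 : (N:ℝ) ≤ (k:ℝ)+1 := by exact_mod_cast hNk
              push_cast at h4 h5 ⊢
              nlinarith
          _ = Real.exp (-(N:ℝ)/2) * Real.exp (-(1:ℝ)/2) ^ (k+1) := by
              rw [Real.exp_add, ← Real.exp_nat_mul]
      have hEtot : (∑' p : Σ k : ℕ, (Fin k → ℕ), EMetric.diam (tE p) ^ s)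
          ≤ ENNReal.ofReal (ε/2) := by
        rw [ENNReal.tsum_sigma']
        have hEk : ∀ k : ℕ, (∑' f : Fin k → ℕ, EMetric.diam (tE ⟨k, f⟩) ^ s)
            ≤ ENNReal.ofReal (Real.exp (-L)) ^ (k+1) := by
          intro k
          refine le_trans (htsum_f k (A (k+1)) (hA0 _) (fun f => tE ⟨k, f⟩) ?_) ?_
          · intro f
            by_cases hf : ∀ j : Fin k, f j ∈ Finset.Icc 1 ⌊A (j.1+1)⌋₊
            · exact Or.inr ⟨Fintype.mem_piFinset.2 hf, by rw [htE]; dsimp only; rw [if_pos hf]⟩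
            · exact Or.inl (by rw [htE]; dsimp only; rw [if_neg hf])
          · rw [← ENNReal.ofReal_pow (Real.exp_nonneg _)]
            exact ENNReal.ofReal_le_ofReal (hrealE k)
        refine le_trans (ENNReal.tsum_le_tsum hEk) ?_
        rw [ENNReal.tsum_geometric_add_one]
        have hq2 : ENNReal.ofReal (Real.exp (-L)) ≤ 2⁻¹ := by
          calc ENNReal.ofReal (Real.exp (-L)) ≤ ENNReal.ofReal (1/2) :=
                ENNReal.ofReal_le_ofReal hLhalf
            _ = 2⁻¹ := by
                rw [one_div, ENNReal.ofReal_inv_of_pos two_pos]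
                norm_num
        have hinv : (1 - ENNReal.ofReal (Real.exp (-L)))⁻¹ ≤ 2 := by
          have h1 : (2:ℝ≥0∞)⁻¹ ≤ 1 - ENNReal.ofReal (Real.exp (-L)) := by
            refine ENNReal.le_sub_of_add_le_left (by norm_num) ?_
            calc ENNReal.ofReal (Real.exp (-L)) + 2⁻¹ ≤ 2⁻¹ + 2⁻¹ :=
                  add_le_add_left hq2 _
              _ = 1 := ENNReal.inv_two_add_inv_two
          calc (1 - ENNReal.ofReal (Real.exp (-L)))⁻¹ ≤ ((2:ℝ≥0∞)⁻¹)⁻¹ :=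
                ENNReal.inv_le_inv' h1
            _ = 2 := inv_inv _
        calc ENNReal.ofReal (Real.exp (-L)) * (1 - ENNReal.ofReal (Real.exp (-L)))⁻¹
            ≤ ENNReal.ofReal (ε/4) * 2 := mul_le_mul' (ENNReal.ofReal_le_ofReal hLε) hinv
          _ = ENNReal.ofReal (ε/2) := by
              rw [show (2:ℝ≥0∞) = ENNReal.ofReal 2 from (ENNReal.ofReal_ofNat 2).symm,
                ← ENNReal.ofReal_mul (by positivity)]
              congr 1
              ring
      have hJtot : (∑' p : Σ k : ℕ, (Fin k → ℕ), EMetric.diam (tJ p) ^ s)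
          ≤ ENNReal.ofReal (ε/2) := by
        rw [ENNReal.tsum_sigma']
        have hJk : ∀ k : ℕ, (∑' f : Fin k → ℕ, EMetric.diam (tJ ⟨k, f⟩) ^ s)
            ≤ ENNReal.ofReal (Real.exp (-(N:ℝ)/2)) *
              ENNReal.ofReal (Real.exp (-(1:ℝ)/2)) ^ (k+1) := by
          intro k
          by_cases hNk : N ≤ k + 1
          · obtain ⟨hg1', -, -, -, -⟩ := hN (k+1) hNk
            have hΨ0 : 0 < Ψ (k+1) := lt_of_lt_of_le (Real.exp_pos _) hg1'
            refine le_trans (htsum_f k (Ψ (k+1)) hΨ0 (fun f => tJ ⟨k, f⟩) ?_) ?_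
            · intro f
              by_cases hf : ∀ j : Fin k, f j ∈ Finset.Icc 1 ⌊A (j.1+1)⌋₊
              · exact Or.inr ⟨Fintype.mem_piFinset.2 hf, by rw [htJ]; dsimp only; rw [if_pos ⟨hNk, hf⟩]⟩
              · exact Or.inl (by rw [htJ]; dsimp only; rw [if_neg (fun h => hf h.2)])
            · rw [← ENNReal.ofReal_pow (Real.exp_nonneg _),
                ← ENNReal.ofReal_mul (Real.exp_nonneg _)]
              exact ENNReal.ofReal_le_ofReal (hrealJ k hNk)
          · have hz : ∀ f : Fin k → ℕ, EMetric.diam (tJ ⟨k, f⟩) ^ s = 0 := by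
              intro f
              rw [htJ]
              dsimp only
              rw [if_neg (fun h => hNk h.1), show EMetric.diam (∅ : Set ℝ) = 0 from Metric.ediam_empty,
                ENNReal.zero_rpow_of_pos hs]
            simp only [hz, tsum_zero]
            exact zero_le
        refine le_trans (ENNReal.tsum_le_tsum hJk) ?_
        rw [ENNReal.tsum_mul_left, ENNReal.tsum_geometric_add_one]
        have hq'le : ENNReal.ofReal (Real.exp (-(1:ℝ)/2)) ≤ 1 := by
          rw [← ENNReal.ofReal_one]
          refine ENNReal.ofReal_le_ofReal ?_
          rw [← Real.exp_zero]
          exact Real.exp_le_exp.2 (by norm_num)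
        have hq'inv : (1 - ENNReal.ofReal (Real.exp (-(1:ℝ)/2)))⁻¹ ≤ ENNReal.ofReal 3 := by
          have hE2 : (3:ℝ)/2 ≤ Real.exp ((1:ℝ)/2) := by
            nlinarith [Real.add_one_le_exp ((1:ℝ)/2)]
          have hEpos : (0:ℝ) < Real.exp ((1:ℝ)/2) := Real.exp_pos _
          have hlt : Real.exp (-(1:ℝ)/2) ≤ 2/3 := by
            have ha : Real.exp (-(1:ℝ)/2) = (Real.exp ((1:ℝ)/2))⁻¹ := by
              rw [← Real.exp_neg]
              norm_num
            rw [ha]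
            calc (Real.exp ((1:ℝ)/2))⁻¹ ≤ ((3:ℝ)/2)⁻¹ :=
                  inv_anti₀ (by norm_num) hE2
              _ = 2/3 := by norm_num
          have hpos : (0:ℝ) < 1 - Real.exp (-(1:ℝ)/2) := by linarith
          have h1q : (1:ℝ≥0∞) - ENNReal.ofReal (Real.exp (-(1:ℝ)/2))
              = ENNReal.ofReal (1 - Real.exp (-(1:ℝ)/2)) := by
            rw [ENNReal.ofReal_sub _ (Real.exp_nonneg _), ENNReal.ofReal_one]
          rw [h1q, ← ENNReal.ofReal_inv_of_pos hpos]
          refine ENNReal.ofReal_le_ofReal ?_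
          have h4 : (1:ℝ)/3 ≤ 1 - Real.exp (-(1:ℝ)/2) := by linarith
          calc (1 - Real.exp (-(1:ℝ)/2))⁻¹ ≤ ((1:ℝ)/3)⁻¹ :=
                inv_anti₀ (by norm_num) h4
            _ = 3 := by norm_num
        calc ENNReal.ofReal (Real.exp (-(N:ℝ)/2)) *
              (ENNReal.ofReal (Real.exp (-(1:ℝ)/2)) *
                (1 - ENNReal.ofReal (Real.exp (-(1:ℝ)/2)))⁻¹)
            ≤ ENNReal.ofReal (Real.exp (-(N:ℝ)/2)) * (1 * ENNReal.ofReal 3) :=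
              mul_le_mul_right (mul_le_mul' hq'le hq'inv) _
          _ = ENNReal.ofReal (Real.exp (-(N:ℝ)/2) * 3) := by
              rw [one_mul, ← ENNReal.ofReal_mul (Real.exp_nonneg _)]
          _ ≤ ENNReal.ofReal (ε/2) :=
              ENNReal.ofReal_le_ofReal ((hN N le_rfl).2.2.2.2)
      rw [ENNReal.tsum_prod', tsum_bool]
      refine le_trans (add_le_add hEtot hJtot) ?_
      rw [← ENNReal.ofReal_add (by positivity) (by positivity)]
      refine ENNReal.ofReal_le_ofReal ?_
      linarith

  refine le_antisymm ?_ zero_le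
  have hcov := fun j : ℕ => claim (Real.exp (-(j:ℝ))) (Real.exp (-(j:ℝ)))
    (Real.exp_pos _) (Real.exp_pos _)
  choose t ht1 ht2 ht3 using hcov
  have hrtend : Tendsto (fun j : ℕ => ENNReal.ofReal (Real.exp (-(j:ℝ)))) atTop (𝓝 0) := by
    rw [← ENNReal.ofReal_zero]
    exact ENNReal.tendsto_ofReal
      (Real.tendsto_exp_neg_atTop_nhds_zero.comp tendsto_natCast_atTop_atTop)
  have hle := Measure.hausdorffMeasure_le_liminf_tsum s E
    (fun j : ℕ => ENNReal.ofReal (Real.exp (-(j:ℝ)))) hrtend t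
    (Eventually.of_forall ht2) (Eventually.of_forall ht1)
  refine le_trans hle ?_
  have h2 : liminf (fun j : ℕ => ∑' (i : Bool × Σ k : ℕ, (Fin k → ℕ)),
        EMetric.diam (t j i) ^ s) atTop
      ≤ liminf (fun j : ℕ => ENNReal.ofReal (Real.exp (-(j:ℝ)))) atTop :=
    liminf_le_liminf (Eventually.of_forall ht3)
  rwa [hrtend.liminf_eq] at h2

end Statement5Aux

theorem statement5 (Φ₁ Φ₂ : ℕ → ℝ) (hpos₁ : ∀ n, 0 < Φ₁ n) (hpos₂ : ∀ n, 0 < Φ₂ n)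
    (htend₁ : Tendsto Φ₁ atTop atTop) (htend₂ : Tendsto Φ₂ atTop atTop)
    (hb₁ : liminf (fun n : ℕ => ((Real.log (Real.log (Φ₁ n)) / n : ℝ) : EReal)) atTop = ⊤)
    (hb₂ : Tendsto (fun n : ℕ => Real.log (Real.log (Φ₂ n)) / n) atTop atTop) :
    dimH (FSet Φ₁ Φ₂) = 0 := by
  classical
  set Ψ : ℕ → ℝ := fun m => min (Real.sqrt (Φ₁ m)) (Real.sqrt (Φ₁ (m-1))) with hΨdef
  have hgrow : ∀ c : ℝ, ∀ᶠ m : ℕ in atTop, Real.exp (Real.exp (c * (m:ℝ))) ≤ Ψ m := by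
    intro c₀
    set c := max c₀ 1 with hcdef
    have hc1 : (1:ℝ) ≤ c := le_max_right _ _
    have hc0 : c₀ ≤ c := le_max_left _ _
    have main : ∀ᶠ m : ℕ in atTop, Real.exp (Real.exp (c * (m:ℝ))) ≤ Ψ m := by
      set C : ℝ := 2*c + 2 with hCdef
      have hlim : ∀ᶠ n : ℕ in atTop,
          (C : EReal) < ((Real.log (Real.log (Φ₁ n)) / n : ℝ) : EReal) := by
        refine eventually_lt_of_lt_liminf ?_ (by isBoundedDefault)
        rw [hb₁]
        exact EReal.coe_lt_top C
      have hΦe : ∀ᶠ n : ℕ in atTop, Real.exp 1 ≤ Φ₁ n := htend₁.eventually_ge_atTop _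
      have hkey : ∀ᶠ n : ℕ in atTop, Real.exp (Real.exp (C * (n:ℝ))) ≤ Φ₁ n := by
        filter_upwards [hlim, hΦe, eventually_ge_atTop 1] with n h1 h2 h3
        have hn0 : (0:ℝ) < n := by exact_mod_cast h3
        have h1' : C < Real.log (Real.log (Φ₁ n)) / n := by exact_mod_cast h1
        have h4 : C * n < Real.log (Real.log (Φ₁ n)) := (lt_div_iff₀ hn0).1 h1'
        have hΦpos : 0 < Φ₁ n := hpos₁ n
        have hlog1 : 1 ≤ Real.log (Φ₁ n) := by
          rw [Real.le_log_iff_exp_le hΦpos]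
          exact h2
        have h5 : Real.exp (C * n) ≤ Real.log (Φ₁ n) := by
          have h := Real.exp_le_exp.2 h4.le
          rwa [Real.exp_log (by linarith)] at h
        have h6 : Real.exp (Real.exp (C * n)) ≤ Φ₁ n := by
          have h := Real.exp_le_exp.2 h5
          rwa [Real.exp_log hΦpos] at h
        exact h6
      have hkey' : ∀ᶠ m : ℕ in atTop, Real.exp (Real.exp (C * ((m-1:ℕ):ℝ))) ≤ Φ₁ (m-1) :=
        (tendsto_sub_atTop_nat 1).eventually hkey
      filter_upwards [hkey, hkey', eventually_ge_atTop 2] with m h1 h2 hm2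
      have hm2R : (2:ℝ) ≤ (m:ℝ) := by exact_mod_cast hm2
      have hm1R : ((m-1:ℕ):ℝ) = (m:ℝ) - 1 := by
        have h : (1:ℕ) ≤ m := by omega
        push_cast [h]
        ring
      have h2e : (2:ℝ) ≤ Real.exp 1 := by nlinarith [Real.add_one_le_exp (1:ℝ)]
      have hsq : ∀ t u : ℝ, 1 + c*(m:ℝ) ≤ u → Real.exp (Real.exp (u)) ≤ t →
          Real.exp (Real.exp (c*(m:ℝ))) ≤ Real.sqrt t := by
        intro t u hu ht
        have htpos : (0:ℝ) < t := lt_of_lt_of_le (Real.exp_pos _) ht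
        rw [Real.le_sqrt (Real.exp_nonneg _) htpos.le]
        have he : Real.exp (Real.exp (c*(m:ℝ)))^2 = Real.exp (2 * Real.exp (c*(m:ℝ))) := by
          rw [← Real.exp_nat_mul]
          norm_num
        rw [he]
        refine le_trans (Real.exp_le_exp.2 ?_) ht
        calc 2 * Real.exp (c*(m:ℝ)) ≤ Real.exp 1 * Real.exp (c*(m:ℝ)) := by
              nlinarith [Real.exp_pos (c*(m:ℝ))]
          _ = Real.exp (1 + c*(m:ℝ)) := by rw [← Real.exp_add]
          _ ≤ Real.exp u := Real.exp_le_exp.2 hu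
      rw [hΨdef]
      refine le_min ?_ ?_
      · refine hsq _ (C * (m:ℝ)) ?_ h1
        rw [hCdef]
        nlinarith
      · refine hsq _ (C * ((m-1:ℕ):ℝ)) ?_ h2
        rw [hCdef, hm1R]
        nlinarith
    refine main.mono fun m hm => le_trans (Real.exp_le_exp.2 (Real.exp_le_exp.2 ?_)) hm
    exact mul_le_mul_of_nonneg_right hc0 (Nat.cast_nonneg m)
  have hsub : FSet Φ₁ Φ₂ ⊆ {x : ℝ | Irrational x ∧ 0 < x ∧ x < 1 ∧
      ∃ᶠ m in atTop, 1 ≤ m ∧ Ψ m ≤ (Statement5Aux.dgt (m - 1) x : ℝ)} := by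
    rintro x ⟨hxi, ⟨hx0, hx1⟩, hfreq, -⟩
    refine ⟨hxi, hx0, hx1, ?_⟩
    rw [frequently_atTop]
    intro M
    obtain ⟨n, hn, hΦ⟩ := frequently_atTop.1 hfreq (max M 1)
    have hn1 : 1 ≤ n := le_trans (le_max_right _ _) hn
    have hnM : M ≤ n := le_trans (le_max_left _ _) hn
    have hpq1 : pq x n = Statement5Aux.dgt (n-1) x := rfl
    have hpq2 : pq x (n+1) = Statement5Aux.dgt n x := rfl
    set a : ℝ := ((Statement5Aux.dgt (n-1) x : ℤ) : ℝ) with hadef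
    set b : ℝ := ((Statement5Aux.dgt n x : ℤ) : ℝ) with hbdef
    have ha1 : 1 ≤ a := by
      rw [hadef]; exact_mod_cast Statement5Aux.dgt_one_le hxi hx0 hx1 (n-1)
    have hb1 : 1 ≤ b := by
      rw [hbdef]; exact_mod_cast Statement5Aux.dgt_one_le hxi hx0 hx1 n
    have hab : Φ₁ n ≤ a * b := by
      rw [hpq1, hpq2] at hΦ
      rw [hadef, hbdef]
      push_cast at hΦ ⊢
      exact hΦ
    have hsq : Real.sqrt (Φ₁ n) ≤ max a b := by
      have h1 : Φ₁ n ≤ (max a b)^2 := by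
        nlinarith [le_max_left a b, le_max_right a b]
      calc Real.sqrt (Φ₁ n) ≤ Real.sqrt ((max a b)^2) := Real.sqrt_le_sqrt h1
        _ = max a b := Real.sqrt_sq (by nlinarith [le_max_left a b])
    rcases le_total b a with hba | hab'
    · refine ⟨n, hnM, hn1, ?_⟩
      rw [hΨdef]
      calc min (Real.sqrt (Φ₁ n)) (Real.sqrt (Φ₁ (n-1)))
          ≤ Real.sqrt (Φ₁ n) := min_le_left _ _
        _ ≤ max a b := hsq
        _ = a := max_eq_left hba
    · refine ⟨n+1, by omega, by omega, ?_⟩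
      rw [hΨdef]
      show min (Real.sqrt (Φ₁ (n+1))) (Real.sqrt (Φ₁ (n+1-1))) ≤ _
      calc min (Real.sqrt (Φ₁ (n+1))) (Real.sqrt (Φ₁ (n+1-1)))
          ≤ Real.sqrt (Φ₁ (n+1-1)) := min_le_right _ _
        _ ≤ max a b := hsq
        _ = b := max_eq_right hab'
  refine le_antisymm ?_ zero_le
  refine ENNReal.le_of_forall_pos_le_add fun d hd _ => ?_
  rw [zero_add]
  refine dimH_le_of_hausdorffMeasure_ne_top ?_
  have h0 := Statement5Aux.hm_zero Ψ hgrow d (by exact_mod_cast hd)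
  have h1 : μH[(d:ℝ)] (FSet Φ₁ Φ₂) = 0 := measure_mono_null hsub h0
  rw [h1]
  exact ENNReal.zero_ne_top

end
end

section
/- The function (B₁,B₂) ↦ g_{B₁,B₂} is continuous on (1,∞)×(1,∞). -/
open Filter MeasureTheory Set
open scoped ENNReal NNReal

noncomputable section

namespace S18


lemma prod_le_contQ : ∀ l : List ℕ, (∀ a ∈ l, 1 ≤ a) → l.prod ≤ contQ l
  | [] => fun _ => by simp [contQ]
  | [a] => fun h => by simp [contQ]
  | a :: b :: l => fun h => by
      have ih := prod_le_contQ (b :: l) (fun x hx => h x (List.mem_cons_of_mem _ hx))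
      have : (a :: b :: l).prod = a * (b :: l).prod := by simp
      rw [this, contQ]
      exact le_trans (Nat.mul_le_mul_left a ih) (Nat.le_add_right _ _)

lemma one_le_contQ (l : List ℕ) (h : ∀ a ∈ l, 1 ≤ a) : 1 ≤ contQ l := by
  refine le_trans ?_ (prod_le_contQ l h)
  exact List.one_le_prod_of_one_le h

lemma prod_le_qTuple {n : ℕ} (f : Fin n → ℕ+) : (∏ i, (f i : ℕ)) ≤ qTuple f := by
  have := prod_le_contQ (List.ofFn fun i => (f i : ℕ)) ?_
  · rwa [List.prod_ofFn] at this
  · intro a ha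
    rw [List.mem_ofFn] at ha
    obtain ⟨i, rfl⟩ := ha
    exact (f i).one_le

lemma one_le_qTuple {n : ℕ} (f : Fin n → ℕ+) : 1 ≤ qTuple f := by
  apply one_le_contQ
  intro a ha
  rw [List.mem_ofFn] at ha
  obtain ⟨i, rfl⟩ := ha
  exact (f i).one_le

lemma tsum_prod_pi : ∀ (n : ℕ) (g : ℕ+ → ℝ≥0∞),
    ∑' f : Fin n → ℕ+, ∏ i, g (f i) = (∑' a : ℕ+, g a) ^ n := by
  intro n
  induction n with
  | zero =>
    intro g
    rw [pow_zero]
    simp only [Finset.univ_eq_empty, Finset.prod_empty]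
    exact tsum_eq_single default (fun b hb => absurd (Subsingleton.elim b default) hb)
  | succ n ih =>
    intro g
    rw [← (Fin.consEquiv (fun _ : Fin (n+1) => ℕ+)).tsum_eq]
    rw [ENNReal.tsum_prod (f := fun a (f : Fin n → ℕ+) => ∏ i, g ((Fin.consEquiv _) (a, f) i))]
    have : ∀ (a : ℕ+) (f : Fin n → ℕ+),
        (∏ i, g ((Fin.consEquiv (fun _ : Fin (n+1) => ℕ+)) (a, f) i)) = g a * ∏ i, g (f i) := by
      intro a f
      simp only [Fin.consEquiv_apply]
      rw [Fin.prod_univ_succ]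
      simp [Fin.cons_succ]
    simp_rw [this]
    rw [pow_succ]
    simp_rw [ENNReal.tsum_mul_left]
    rw [ENNReal.tsum_mul_right, ih g]
    ring



lemma sum_sq_bound : ∀ N : ℕ, ∑ k ∈ Finset.range N, (1:ℝ)/((k:ℝ)+1)^2 ≤ 2 - 2/((N:ℝ)+1) := by
  intro N
  induction N with
  | zero => simp
  | succ N ih =>
    rw [Finset.sum_range_succ]
    have h1 : (0:ℝ) < (N:ℝ)+1 := by positivity
    have h2 : (0:ℝ) < (N:ℝ)+2 := by positivity
    push_cast
    have key : (1:ℝ)/((N:ℝ)+1)^2 ≤ 2/((N:ℝ)+1) - 2/((N:ℝ)+2) := by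
      rw [div_sub_div _ _ (ne_of_gt h1) (ne_of_gt h2), div_le_div_iff₀ (by positivity) (by positivity)]
      ring_nf
      nlinarith [sq_nonneg ((N:ℝ)+1)]
    rw [show ((N:ℝ)+1+1) = ((N:ℝ)+2) by ring]
    linarith

lemma summable_one_div_sq : Summable (fun n : ℕ => 1 / ((n:ℝ)+1)^2) := by
  have := Real.summable_one_div_nat_pow (p := 2) |>.2 (by norm_num)
  have h2 := (summable_nat_add_iff 1).2 this
  convert h2 using 2 with n
  push_cast
  rfl
  norm_num

lemma zeta_le_two : (∑' a : ℕ+, ((a : ℕ) : ℝ≥0∞) ^ (-2:ℝ)) ≤ 2 := by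
  have hterm : ∀ m : ℕ, ((m+1 : ℕ) : ℝ≥0∞) ^ (-2:ℝ) = ENNReal.ofReal (1/((m:ℝ)+1)^2) := by
    intro m
    have hm : (0:ℝ) < (m:ℝ)+1 := by positivity
    rw [show ((m+1:ℕ):ℝ≥0∞) = ENNReal.ofReal ((m:ℝ)+1) by
      rw [← ENNReal.ofReal_natCast]; push_cast; ring_nf]
    rw [ENNReal.ofReal_rpow_of_pos hm]
    congr 1
    rw [Real.rpow_neg hm.le, one_div]
    congr 1
    rw [← Real.rpow_natCast ((m:ℝ)+1) 2]
    norm_num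
  have hre : (∑' a : ℕ+, ((a : ℕ) : ℝ≥0∞) ^ (-2:ℝ))
      = ∑' m : ℕ, ((m+1 : ℕ) : ℝ≥0∞) ^ (-2:ℝ) := by
    rw [← Equiv.pnatEquivNat.tsum_eq (f := fun m : ℕ => ((m+1 : ℕ) : ℝ≥0∞) ^ (-2:ℝ))]
    apply tsum_congr
    intro a
    congr 2
    have := a.pos
    simp only [Equiv.pnatEquivNat, Equiv.coe_fn_mk, PNat.natPred]
    omega
  rw [hre]
  calc ∑' m : ℕ, ((m+1 : ℕ) : ℝ≥0∞) ^ (-2:ℝ)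
      = ∑' m : ℕ, ENNReal.ofReal (1/((m:ℝ)+1)^2) := by simp_rw [hterm]
    _ = ENNReal.ofReal (∑' m : ℕ, 1/((m:ℝ)+1)^2) :=
        (ENNReal.ofReal_tsum_of_nonneg (fun n => by positivity) summable_one_div_sq).symm
    _ ≤ ENNReal.ofReal 2 := by
        apply ENNReal.ofReal_le_ofReal
        apply Summable.tsum_le_of_sum_range_le summable_one_div_sq
        intro N
        refine (sum_sq_bound N).trans ?_
        have : (0:ℝ) < (N:ℝ)+1 := by positivity
        have : 0 ≤ 2/((N:ℝ)+1) := by positivity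
        linarith
    _ = 2 := by norm_num

lemma ecoe_add_assoc (a b : ℝ) (x : EReal) :
    (a:EReal) + ((b:EReal) + x) = ((a+b : ℝ):EReal) + x := by
  induction x using EReal.rec with
  | bot => simp
  | coe x => norm_cast; ring
  | top =>
    rw [EReal.add_top_of_ne_bot (by simp), EReal.add_top_of_ne_bot (by simp),
      EReal.add_top_of_ne_bot (by simp)]

lemma invn_mul_add {n : ℕ} (hn : 1 ≤ n) (c : ℝ) (L : EReal) :
    (((n:ℝ)⁻¹ : ℝ) : EReal) * ((((n:ℝ) * c : ℝ):EReal) + L)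
      = (c : EReal) + (((n:ℝ)⁻¹ : ℝ) : EReal) * L := by
  have hnR : (0:ℝ) < (n:ℝ)⁻¹ := by positivity
  have hnE : (0:EReal) < (((n:ℝ)⁻¹ : ℝ) : EReal) := by exact_mod_cast hnR
  induction L using EReal.rec with
  | bot =>
    rw [EReal.add_bot, EReal.mul_bot_of_pos hnE, EReal.add_bot]
  | coe x =>
    norm_cast
    have : (n:ℝ) ≠ 0 := by positivity
    field_simp
  | top =>
    rw [EReal.add_top_of_ne_bot (EReal.coe_ne_bot _), EReal.mul_top_of_pos hnE,
      EReal.add_top_of_ne_bot (EReal.coe_ne_bot _)]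

lemma invn_mul_le {n : ℕ} (hn : 1 ≤ n) {x : EReal} {K : ℝ} (h : x ≤ (((n:ℝ) * K : ℝ) : EReal)) :
    (((n:ℝ)⁻¹ : ℝ) : EReal) * x ≤ (K : EReal) := by
  have h0 : (0:EReal) ≤ (((n:ℝ)⁻¹ : ℝ):EReal) := by
    have : (0:ℝ) ≤ (n:ℝ)⁻¹ := by positivity
    exact_mod_cast this
  calc (((n:ℝ)⁻¹:ℝ):EReal) * x ≤ (((n:ℝ)⁻¹:ℝ):EReal) * (((n:ℝ)*K:ℝ):EReal) :=
        mul_le_mul_of_nonneg_left h h0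
    _ = (K : EReal) := by
        rw [← EReal.coe_mul]
        congr 1
        have : (n:ℝ) ≠ 0 := by positivity
        field_simp

lemma limsup_coe_add_le (c : ℝ) (u : ℕ → EReal) :
    limsup (fun n => (c : EReal) + u n) atTop ≤ (c:EReal) + limsup u atTop := by
  have h := EReal.limsup_add_le (f := atTop) (u := fun _ : ℕ => (c:EReal)) (v := u)
    (Or.inl (by rw [limsup_const]; simp)) (Or.inl (by rw [limsup_const]; simp))
  rw [limsup_const] at h
  exact h











/-! real exponent helpers -/

lemma real_rpow_mul_nat {a : ℝ} (ha : 0 ≤ a) (e : ℝ) (n : ℕ) :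
    a ^ (e * (n:ℝ)) = (a ^ e) ^ n := by
  rw [Real.rpow_mul ha, Real.rpow_natCast]

lemma rpow_nat_rpow {x : ℝ} (hx : 0 ≤ x) (n : ℕ) (t : ℝ) :
    (x ^ (n:ℝ)) ^ t = (x ^ t) ^ n := by
  rw [← Real.rpow_mul hx, mul_comm, Real.rpow_mul hx, Real.rpow_natCast]

lemma real_split {a b : ℝ} (ha : 0 < a) (hb : 0 < b) (e : ℝ) (n : ℕ) :
    a ^ (e * (n:ℝ)) = ((a/b) ^ e) ^ n * b ^ (e * (n:ℝ)) := by
  have : ((a/b) ^ e) ^ n * b ^ (e * (n:ℝ)) = a ^ (e * (n:ℝ)) := by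
    rw [← real_rpow_mul_nat (by positivity) e n, ← Real.mul_rpow (by positivity) hb.le,
      div_mul_cancel₀ _ (ne_of_gt hb)]
  exact this.symm

lemma rpow_neg_le {x y : ℝ≥0∞} (h : x ≤ y) {s : ℝ} (hs : 0 ≤ s) : y ^ (-s) ≤ x ^ (-s) := by
  rw [ENNReal.rpow_neg, ENNReal.rpow_neg]
  exact ENNReal.inv_le_inv.2 (ENNReal.rpow_le_rpow h hs)

/-! the partition sums -/

def X (B₁ : ℝ) (n : ℕ) (f : Fin n → ℕ+) : ℝ≥0∞ :=
  ENNReal.ofReal (B₁ ^ (n : ℝ)) * (qTuple f : ℝ≥0∞) ^ 2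

def Sn (B₁ B₂ s : ℝ) (n : ℕ) : ℝ≥0∞ :=
  ∑' f : Fin n → ℕ+, ENNReal.ofReal (B₂ ^ ((1 - s) * n)) * X B₁ n f ^ (-s)

def PrOf (S : ℕ → ℝ≥0∞) : EReal :=
  Filter.limsup (fun n : ℕ => (((n : ℝ)⁻¹ : ℝ) : EReal) * ENNReal.log (S n)) Filter.atTop

def ASet (B₁ B₂ : ℝ) : Set ℝ := {s : ℝ | 0 ≤ s ∧ PrOf (Sn B₁ B₂ s) ≤ 0}

lemma gB_eq (B₁ B₂ : ℝ) : gB B₁ B₂ = sInf (ASet B₁ B₂) := rfl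

variable {B₁ B₂ B₁' B₂' : ℝ} {n : ℕ} {f : Fin n → ℕ+}

lemma X_ne_top : X B₁ n f ≠ ⊤ := by
  apply ENNReal.mul_ne_top ENNReal.ofReal_ne_top
  exact ENNReal.pow_ne_top (ENNReal.natCast_ne_top _)

lemma le_X : ENNReal.ofReal (B₁ ^ (n:ℝ)) ≤ X B₁ n f := by
  apply le_mul_of_one_le_right zero_le
  have h : (1:ℝ≥0∞) ≤ (qTuple f : ℝ≥0∞) := by exact_mod_cast one_le_qTuple f
  calc (1:ℝ≥0∞) = 1^2 := by norm_num
    _ ≤ _ := pow_le_pow_left₀ (by norm_num) h 2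

lemma X_ne_zero (hB₁ : 0 < B₁) : X B₁ n f ≠ 0 := by
  have h1 : (0:ℝ≥0∞) < ENNReal.ofReal (B₁ ^ (n:ℝ)) :=
    ENNReal.ofReal_pos.2 (Real.rpow_pos_of_pos hB₁ _)
  exact ne_of_gt (lt_of_lt_of_le h1 le_X)

/-! generic pressure lemmas -/

lemma PrOf_le_of_le {ρ : ℝ} (hρ : 0 < ρ) {S S' : ℕ → ℝ≥0∞}
    (h : ∀ n, 1 ≤ n → S' n ≤ ENNReal.ofReal (ρ^n) * S n) :
    PrOf S' ≤ (Real.log ρ : EReal) + PrOf S := by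
  refine le_trans ?_ (limsup_coe_add_le _ _)
  refine Filter.limsup_le_limsup ?_ (by isBoundedDefault) (by isBoundedDefault)
  filter_upwards [eventually_ge_atTop 1] with n hn
  have h1 : ENNReal.log (S' n) ≤ (((n:ℝ) * Real.log ρ : ℝ) : EReal) + ENNReal.log (S n) := by
    refine le_trans (ENNReal.log_monotone (h n hn)) ?_
    rw [ENNReal.log_mul_add, ENNReal.log_ofReal_of_pos (by positivity), Real.log_pow]
  calc (((n:ℝ)⁻¹ : ℝ) : EReal) * ENNReal.log (S' n)
      ≤ (((n:ℝ)⁻¹ : ℝ) : EReal) * ((((n:ℝ) * Real.log ρ : ℝ):EReal) + ENNReal.log (S n)) := by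
        apply mul_le_mul_of_nonneg_left h1
        have : (0:ℝ) ≤ (n:ℝ)⁻¹ := by positivity
        exact_mod_cast this
    _ = (Real.log ρ : EReal) + (((n:ℝ)⁻¹ : ℝ) : EReal) * ENNReal.log (S n) :=
        invn_mul_add hn _ _

lemma PrOf_eq {ρ : ℝ} (hρ : 0 < ρ) {S S' : ℕ → ℝ≥0∞}
    (h : ∀ n, 1 ≤ n → S' n = ENNReal.ofReal (ρ^n) * S n) :
    PrOf S' = (Real.log ρ : EReal) + PrOf S := by
  have h1 : PrOf S' ≤ (Real.log ρ : EReal) + PrOf S :=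
    PrOf_le_of_le hρ (fun n hn => (h n hn).le)
  have h2 : PrOf S ≤ (Real.log ρ⁻¹ : EReal) + PrOf S' := by
    apply PrOf_le_of_le (by positivity)
    intro n hn
    rw [h n hn, ← mul_assoc, ← ENNReal.ofReal_mul (by positivity), ← mul_pow,
      inv_mul_cancel₀ (ne_of_gt hρ)]
    simp
  refine le_antisymm h1 ?_
  calc (Real.log ρ : EReal) + PrOf S
      ≤ (Real.log ρ : EReal) + ((Real.log ρ⁻¹ : EReal) + PrOf S') := add_le_add_right h2 _
    _ = PrOf S' := by
        rw [ecoe_add_assoc, Real.log_inv]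
        norm_num

lemma Sn_shift (h1 : 0 < B₁) (h2 : 0 < B₂) (h1' : 0 < B₁') (h2' : 0 < B₂') (s : ℝ) (n : ℕ) :
    Sn B₁' B₂' s n
      = ENNReal.ofReal (((B₁'/B₁) ^ (-s) * (B₂'/B₂) ^ (1-s))^n) * Sn B₁ B₂ s n := by
  rw [Sn, Sn, ← ENNReal.tsum_mul_left]
  apply tsum_congr
  intro f
  have e2 : ENNReal.ofReal (B₂' ^ ((1 - s) * (n:ℝ)))
      = ENNReal.ofReal (((B₂'/B₂) ^ (1-s))^n) * ENNReal.ofReal (B₂ ^ ((1 - s) * (n:ℝ))) := by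
    rw [← ENNReal.ofReal_mul (by positivity), ← real_split h2' h2]
  have e1 : X B₁' n f = ENNReal.ofReal (((B₁'/B₁))^n) * X B₁ n f := by
    rw [X, X, ← mul_assoc, ← ENNReal.ofReal_mul (by positivity)]
    congr 2
    have h := real_split h1' h1 1 n
    rw [one_mul, Real.rpow_one] at h
    exact h
  rw [e2, e1, ENNReal.mul_rpow_of_ne_top ENNReal.ofReal_ne_top X_ne_top,
    ENNReal.ofReal_rpow_of_pos (by positivity)]
  have e3 : ((B₁'/B₁ : ℝ)^(n:ℕ)) ^ (-s) = ((B₁'/B₁)^(-s))^n := by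
    rw [← Real.rpow_natCast (B₁'/B₁) n, rpow_nat_rpow (by positivity)]
  rw [e3, mul_pow, ENNReal.ofReal_mul (by positivity)]
  ring

lemma Sn_slope (h1 : 1 < B₁) (h2 : 1 < B₂) (s : ℝ) {ε : ℝ} (hε : 0 ≤ ε) (n : ℕ) :
    Sn B₁ B₂ (s+ε) n ≤ ENNReal.ofReal (((B₁*B₂) ^ (-ε))^n) * Sn B₁ B₂ s n := by
  have hB₁ : (0:ℝ) < B₁ := one_pos.trans h1
  have hB₂ : (0:ℝ) < B₂ := one_pos.trans h2
  rw [Sn, Sn, ← ENNReal.tsum_mul_left]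
  apply ENNReal.tsum_le_tsum
  intro f
  have e2 : ENNReal.ofReal (B₂ ^ ((1 - (s+ε)) * (n:ℝ)))
      = ENNReal.ofReal ((B₂^(-ε:ℝ))^n) * ENNReal.ofReal (B₂ ^ ((1 - s) * (n:ℝ))) := by
    rw [← ENNReal.ofReal_mul (by positivity), ← real_rpow_mul_nat hB₂.le (-ε) n,
      ← Real.rpow_add hB₂]
    ring_nf
  have eX : X B₁ n f ^ (-(s+ε)) = X B₁ n f ^ (-s) * X B₁ n f ^ (-ε) := by
    rw [← ENNReal.rpow_add _ _ (X_ne_zero hB₁) X_ne_top]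
    ring_nf
  have hXe : X B₁ n f ^ (-ε) ≤ ENNReal.ofReal ((B₁ ^ (-ε:ℝ))^n) := by
    refine le_trans (rpow_neg_le le_X hε) ?_
    rw [ENNReal.ofReal_rpow_of_pos (by positivity), rpow_nat_rpow hB₁.le]
  calc ENNReal.ofReal (B₂ ^ ((1 - (s+ε)) * (n:ℝ))) * X B₁ n f ^ (-(s+ε))
      = (ENNReal.ofReal (B₂ ^ ((1 - s) * (n:ℝ))) * X B₁ n f ^ (-s))
        * (ENNReal.ofReal ((B₂^(-ε:ℝ))^n) * X B₁ n f ^ (-ε)) := by rw [e2, eX]; ring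
    _ ≤ (ENNReal.ofReal (B₂ ^ ((1 - s) * (n:ℝ))) * X B₁ n f ^ (-s))
        * (ENNReal.ofReal ((B₂^(-ε:ℝ))^n) * ENNReal.ofReal ((B₁ ^ (-ε:ℝ))^n)) := by gcongr
    _ = ENNReal.ofReal (((B₁*B₂) ^ (-ε))^n)
        * (ENNReal.ofReal (B₂ ^ ((1 - s) * (n:ℝ))) * X B₁ n f ^ (-s)) := by
        have h : ((B₂^(-ε:ℝ)) * (B₁ ^ (-ε:ℝ))) = ((B₁*B₂)^(-ε:ℝ)) := by
          rw [← Real.mul_rpow hB₂.le hB₁.le, mul_comm B₂ B₁]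
        rw [← ENNReal.ofReal_mul (by positivity), ← mul_pow, h]
        ring

lemma Sn_le (h1 : 1 < B₁) (h2 : 1 < B₂) {s : ℝ} (hs : 1 ≤ s) (n : ℕ) :
    Sn B₁ B₂ s n ≤ ENNReal.ofReal ((2 * (B₂ ^ (1-s) * B₁ ^ (-s))) ^ n) := by
  have hB₁ : (0:ℝ) < B₁ := one_pos.trans h1
  have hB₂ : (0:ℝ) < B₂ := one_pos.trans h2
  have hs0 : (0:ℝ) ≤ s := by linarith
  have hterm : ∀ f : Fin n → ℕ+, ENNReal.ofReal (B₂ ^ ((1 - s) * (n:ℝ))) * X B₁ n f ^ (-s)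
      ≤ (ENNReal.ofReal (B₂ ^ ((1-s) * (n:ℝ))) * ENNReal.ofReal (B₁ ^ (n:ℝ)) ^ (-s))
        * ∏ i, (((f i : ℕ) : ℝ≥0∞) ^ (-2:ℝ)) := by
    intro f
    rw [mul_assoc]
    apply mul_le_mul_right
    have hq : ((∏ i, (f i : ℕ) : ℕ) : ℝ≥0∞) ≤ ((qTuple f : ℕ) : ℝ≥0∞) :=
      Nat.cast_le.2 (prod_le_qTuple f)
    have step1 : ENNReal.ofReal (B₁ ^ (n:ℝ)) * ((∏ i, (f i : ℕ) : ℕ) : ℝ≥0∞)^2 ≤ X B₁ n f :=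
      mul_le_mul_right (pow_le_pow_left₀ zero_le hq 2) _
    refine le_trans (rpow_neg_le step1 hs0) ?_
    rw [ENNReal.mul_rpow_of_ne_top ENNReal.ofReal_ne_top
      (ENNReal.pow_ne_top (ENNReal.natCast_ne_top _))]
    apply mul_le_mul_right
    rw [Nat.cast_prod, ← Finset.prod_pow,
      ← ENNReal.prod_rpow_of_ne_top (fun i _ => ENNReal.pow_ne_top (ENNReal.natCast_ne_top _))]
    apply Finset.prod_le_prod'
    intro i _
    have hx1 : (1:ℝ≥0∞) ≤ ((f i : ℕ) : ℝ≥0∞) := by exact_mod_cast (f i).one_le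
    rw [← ENNReal.rpow_natCast (((f i : ℕ)):ℝ≥0∞) 2, ← ENNReal.rpow_mul]
    refine ENNReal.rpow_le_rpow_of_exponent_le hx1 ?_
    push_cast
    linarith
  calc Sn B₁ B₂ s n
      ≤ ∑' f : Fin n → ℕ+, (ENNReal.ofReal (B₂ ^ ((1-s) * (n:ℝ))) * ENNReal.ofReal (B₁ ^ (n:ℝ)) ^ (-s))
        * ∏ i, (((f i : ℕ) : ℝ≥0∞) ^ (-2:ℝ)) := ENNReal.tsum_le_tsum hterm
    _ = (ENNReal.ofReal (B₂ ^ ((1-s) * (n:ℝ))) * ENNReal.ofReal (B₁ ^ (n:ℝ)) ^ (-s))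
        * (∑' a : ℕ+, ((a : ℕ) : ℝ≥0∞) ^ (-2:ℝ)) ^ n := by
        rw [ENNReal.tsum_mul_left, tsum_prod_pi n (fun a : ℕ+ => ((a:ℕ):ℝ≥0∞) ^ (-2:ℝ))]
    _ ≤ (ENNReal.ofReal (B₂ ^ ((1-s) * (n:ℝ))) * ENNReal.ofReal (B₁ ^ (n:ℝ)) ^ (-s)) * 2 ^ n :=
        mul_le_mul_right (pow_le_pow_left₀ zero_le zeta_le_two n) _
    _ = ENNReal.ofReal ((2 * (B₂ ^ (1-s) * B₁ ^ (-s))) ^ n) := by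
        rw [real_rpow_mul_nat hB₂.le (1-s) n,
          ENNReal.ofReal_rpow_of_pos (Real.rpow_pos_of_pos hB₁ _), rpow_nat_rpow hB₁.le,
          show (2:ℝ≥0∞) = ENNReal.ofReal 2 by norm_num,
          ← ENNReal.ofReal_pow (by norm_num : (0:ℝ) ≤ 2),
          ← ENNReal.ofReal_mul (by positivity), ← ENNReal.ofReal_mul (by positivity)]
        congr 1
        rw [mul_pow, mul_pow]
        ring

lemma Pr_shift (h1 : 0 < B₁) (h2 : 0 < B₂) (h1' : 0 < B₁') (h2' : 0 < B₂') (s : ℝ) :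
    PrOf (Sn B₁' B₂' s)
      = (((-s) * (Real.log B₁' - Real.log B₁) + (1-s) * (Real.log B₂' - Real.log B₂) : ℝ) : EReal)
        + PrOf (Sn B₁ B₂ s) := by
  have h := PrOf_eq (S := Sn B₁ B₂ s) (S' := Sn B₁' B₂' s)
    (ρ := (B₁'/B₁) ^ (-s) * (B₂'/B₂) ^ (1-s)) (by positivity)
    (fun n _ => Sn_shift h1 h2 h1' h2' s n)
  rw [h]
  congr 2
  rw [Real.log_mul (by positivity) (by positivity), Real.log_rpow (by positivity),
    Real.log_rpow (by positivity), Real.log_div (ne_of_gt h1') (ne_of_gt h1),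
    Real.log_div (ne_of_gt h2') (ne_of_gt h2)]

lemma Pr_slope (h1 : 1 < B₁) (h2 : 1 < B₂) (s : ℝ) {d : ℝ} (hd : 0 ≤ d) :
    PrOf (Sn B₁ B₂ (s+d)) ≤ ((-(d * Real.log (B₁*B₂)) : ℝ) : EReal) + PrOf (Sn B₁ B₂ s) := by
  have hB₁ : (0:ℝ) < B₁ := one_pos.trans h1
  have hB₂ : (0:ℝ) < B₂ := one_pos.trans h2
  have h := PrOf_le_of_le (S := Sn B₁ B₂ s) (S' := Sn B₁ B₂ (s+d))
    (ρ := (B₁*B₂) ^ (-d)) (by positivity)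
    (fun n _ => Sn_slope h1 h2 s hd n)
  rwa [Real.log_rpow (by positivity), neg_mul] at h

lemma Pr_le (h1 : 1 < B₁) (h2 : 1 < B₂) {s : ℝ} (hs : 1 ≤ s) :
    PrOf (Sn B₁ B₂ s) ≤ ((Real.log (2 * (B₂ ^ (1-s) * B₁ ^ (-s))) : ℝ) : EReal) := by
  have hB₁ : (0:ℝ) < B₁ := one_pos.trans h1
  have hB₂ : (0:ℝ) < B₂ := one_pos.trans h2
  apply Filter.limsup_le_of_le (by isBoundedDefault)
  filter_upwards [eventually_ge_atTop 1] with n hn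
  apply invn_mul_le hn
  refine le_trans (ENNReal.log_monotone (Sn_le h1 h2 hs n)) ?_
  rw [ENNReal.log_ofReal_of_pos (by positivity), Real.log_pow]

lemma ASet_bddBelow : BddBelow (ASet B₁ B₂) := ⟨0, fun s hs => hs.1⟩

lemma ASet_nonempty (h1 : 1 < B₁) (h2 : 1 < B₂) : (ASet B₁ B₂).Nonempty := by
  have hB₁ : (0:ℝ) < B₁ := one_pos.trans h1
  have hB₂ : (0:ℝ) < B₂ := one_pos.trans h2
  have hc : 0 < Real.log (B₁*B₂) := Real.log_pos (by nlinarith)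
  set s := max 1 ((Real.log 2 + Real.log B₂)/(Real.log (B₁*B₂))) with hsdef
  have hs1 : (1:ℝ) ≤ s := le_max_left _ _
  refine ⟨s, by linarith, ?_⟩
  refine le_trans (Pr_le h1 h2 hs1) ?_
  have hK : Real.log (2 * (B₂ ^ (1-s) * B₁ ^ (-s))) ≤ 0 := by
    rw [Real.log_mul (by norm_num) (by positivity), Real.log_mul (by positivity) (by positivity),
      Real.log_rpow hB₂, Real.log_rpow hB₁]
    have hs2 : (Real.log 2 + Real.log B₂)/(Real.log (B₁*B₂)) ≤ s := le_max_right _ _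
    rw [div_le_iff₀ hc] at hs2
    rw [Real.log_mul (ne_of_gt hB₁) (ne_of_gt hB₂)] at hs2
    nlinarith [hs2]
  have h0 : ((Real.log (2 * (B₂ ^ (1-s) * B₁ ^ (-s))) : ℝ) : EReal) ≤ ((0:ℝ) : EReal) :=
    EReal.coe_le_coe_iff.2 hK
  simpa using h0

lemma gB_nonneg (h1 : 1 < B₁) (h2 : 1 < B₂) : 0 ≤ gB B₁ B₂ := by
  rw [gB_eq]
  exact le_csInf (ASet_nonempty h1 h2) (fun s hs => hs.1)

lemma gB_close (h1 : 1 < B₁) (h2 : 1 < B₂) (h1' : 1 < B₁') (h2' : 1 < B₂')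
    {ε : ℝ} (hε : 0 < ε)
    (hL1 : |Real.log B₁' - Real.log B₁| ≤ ε * Real.log (B₁*B₂) / (8 * (gB B₁ B₂ + 2 + ε)))
    (hL2 : |Real.log B₂' - Real.log B₂| ≤ ε * Real.log (B₁*B₂) / (8 * (gB B₁ B₂ + 2 + ε))) :
    |gB B₁' B₂' - gB B₁ B₂| < ε := by
  have hB₁ : (0:ℝ) < B₁ := one_pos.trans h1
  have hB₂ : (0:ℝ) < B₂ := one_pos.trans h2
  have hB₁' : (0:ℝ) < B₁' := one_pos.trans h1'
  have hB₂' : (0:ℝ) < B₂' := one_pos.trans h2'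
  have hc : 0 < Real.log (B₁*B₂) := Real.log_pos (by nlinarith)
  set g := gB B₁ B₂ with hgdef
  have hg0 : 0 ≤ g := gB_nonneg h1 h2
  set c := Real.log (B₁*B₂) with hcdef
  set M := g + 2 + ε with hMdef
  have hM : 0 < M := by simp only [hMdef]; linarith
  set θ := ε * c / (8 * M) with hθdef
  have hθpos : 0 < θ := by
    rw [hθdef]
    exact div_pos (mul_pos hε hc) (by linarith)
  have shift_bound : ∀ s : ℝ, 0 ≤ s → s ≤ g + ε →
      |(-s) * (Real.log B₁' - Real.log B₁) + (1-s) * (Real.log B₂' - Real.log B₂)|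
        ≤ ε * c / 4 := by
    intro s hs0 hs1
    have hsM : s ≤ M := by simp only [hMdef]; linarith
    have b1 : |(-s) * (Real.log B₁' - Real.log B₁)| ≤ M * θ := by
      rw [abs_mul, abs_neg, abs_of_nonneg hs0]
      exact mul_le_mul hsM hL1 (abs_nonneg _) hM.le
    have b2 : |(1-s) * (Real.log B₂' - Real.log B₂)| ≤ M * θ := by
      rw [abs_mul]
      have h1s : |1-s| ≤ M := by
        rw [abs_le]
        constructor <;> (simp only [hMdef]; linarith)
      exact mul_le_mul h1s hL2 (abs_nonneg _) hM.le
    have hsum : M * θ + M * θ = ε * c / 4 := by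
      rw [hθdef]
      field_simp
      ring
    calc |(-s) * (Real.log B₁' - Real.log B₁) + (1-s) * (Real.log B₂' - Real.log B₂)|
        ≤ |(-s) * (Real.log B₁' - Real.log B₁)| + |(1-s) * (Real.log B₂' - Real.log B₂)| :=
          abs_add_le _ _
      _ ≤ M * θ + M * θ := add_le_add b1 b2
      _ = ε * c / 4 := hsum
  have upper : gB B₁' B₂' ≤ g + ε/2 := by
    have hlt : sInf (ASet B₁ B₂) < g + ε/4 := by
      rw [← gB_eq, ← hgdef]
      linarith
    obtain ⟨s₀, hs₀A, hs₀lt⟩ := exists_lt_of_csInf_lt (ASet_nonempty h1 h2) hlt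
    have hd0 : 0 ≤ (g + ε/2) - s₀ := by linarith
    have hPrBt : PrOf (Sn B₁ B₂ (g + ε/2)) ≤ ((-(ε/4*c) : ℝ) : EReal) := by
      have hsl := Pr_slope h1 h2 s₀ hd0
      rw [show s₀ + ((g + ε/2) - s₀) = g + ε/2 by ring] at hsl
      refine le_trans hsl ?_
      calc ((-(((g + ε/2) - s₀) * c) : ℝ) : EReal) + PrOf (Sn B₁ B₂ s₀)
          ≤ ((-(((g + ε/2) - s₀) * c) : ℝ) : EReal) + 0 := add_le_add_right hs₀A.2 _
        _ = ((-(((g + ε/2) - s₀) * c) : ℝ) : EReal) := add_zero _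
        _ ≤ ((-(ε/4*c) : ℝ) : EReal) := by
            apply EReal.coe_le_coe_iff.2
            nlinarith [mul_nonneg (show (0:ℝ) ≤ (g + ε/2) - s₀ - ε/4 by linarith) hc.le]
    have htA : (g + ε/2) ∈ ASet B₁' B₂' := by
      refine ⟨by linarith, ?_⟩
      rw [Pr_shift hB₁ hB₂ hB₁' hB₂' (g + ε/2)]
      have hδb : (-(g + ε/2)) * (Real.log B₁' - Real.log B₁)
          + (1-(g + ε/2)) * (Real.log B₂' - Real.log B₂) ≤ ε * c / 4 :=
        le_trans (le_abs_self _) (shift_bound (g + ε/2) (by linarith) (by linarith))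
      calc (((-(g + ε/2)) * (Real.log B₁' - Real.log B₁)
              + (1-(g + ε/2)) * (Real.log B₂' - Real.log B₂) : ℝ) : EReal)
            + PrOf (Sn B₁ B₂ (g + ε/2))
          ≤ (((-(g + ε/2)) * (Real.log B₁' - Real.log B₁)
              + (1-(g + ε/2)) * (Real.log B₂' - Real.log B₂) : ℝ) : EReal)
            + ((-(ε/4*c) : ℝ) : EReal) := add_le_add_right hPrBt _
        _ = ((((-(g + ε/2)) * (Real.log B₁' - Real.log B₁)
              + (1-(g + ε/2)) * (Real.log B₂' - Real.log B₂)) + -(ε/4*c) : ℝ) : EReal) :=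
            (EReal.coe_add _ _).symm
        _ ≤ ((0:ℝ) : EReal) := EReal.coe_le_coe_iff.2 (by linarith)
        _ = 0 := by norm_num
    rw [gB_eq]
    exact csInf_le ASet_bddBelow htA
  have lower : g - ε/2 ≤ gB B₁' B₂' := by
    by_contra hcon
    push_neg at hcon
    rw [gB_eq] at hcon
    obtain ⟨s, hsA, hslt⟩ := exists_lt_of_csInf_lt (ASet_nonempty h1' h2') hcon
    have hs0 : (0:ℝ) ≤ s := hsA.1
    have hPrBs : PrOf (Sn B₁ B₂ s) ≤ ((ε * c / 4 : ℝ) : EReal) := by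
      rw [Pr_shift hB₁' hB₂' hB₁ hB₂ s]
      have hδb : (-s) * (Real.log B₁ - Real.log B₁') + (1-s) * (Real.log B₂ - Real.log B₂')
          ≤ ε * c / 4 := by
        refine le_trans (le_abs_self _) ?_
        have habs : |(-s) * (Real.log B₁ - Real.log B₁') + (1-s) * (Real.log B₂ - Real.log B₂')|
            = |(-s) * (Real.log B₁' - Real.log B₁) + (1-s) * (Real.log B₂' - Real.log B₂)| := by
          rw [← abs_neg]
          congr 1
          ring
        rw [habs]
        exact shift_bound s hs0 (by linarith)
      calc (((-s) * (Real.log B₁ - Real.log B₁')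
              + (1-s) * (Real.log B₂ - Real.log B₂') : ℝ) : EReal) + PrOf (Sn B₁' B₂' s)
          ≤ (((-s) * (Real.log B₁ - Real.log B₁')
              + (1-s) * (Real.log B₂ - Real.log B₂') : ℝ) : EReal) + 0 := add_le_add_right hsA.2 _
        _ = (((-s) * (Real.log B₁ - Real.log B₁')
              + (1-s) * (Real.log B₂ - Real.log B₂') : ℝ) : EReal) := add_zero _
        _ ≤ ((ε * c / 4 : ℝ) : EReal) := EReal.coe_le_coe_iff.2 hδb
    have hmem : (g - ε/4) ∈ ASet B₁ B₂ := by
      have hd0 : 0 ≤ (g - ε/4) - s := by linarith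
      refine ⟨by linarith, ?_⟩
      have hsl := Pr_slope h1 h2 s hd0
      rw [show s + ((g - ε/4) - s) = g - ε/4 by ring] at hsl
      refine le_trans hsl ?_
      calc ((-(((g - ε/4) - s) * c) : ℝ) : EReal) + PrOf (Sn B₁ B₂ s)
          ≤ ((-(((g - ε/4) - s) * c) : ℝ) : EReal) + ((ε * c / 4 : ℝ) : EReal) :=
            add_le_add_right hPrBs _
        _ = ((-(((g - ε/4) - s) * c) + ε * c / 4 : ℝ) : EReal) := (EReal.coe_add _ _).symm
        _ ≤ ((0:ℝ) : EReal) := by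
            apply EReal.coe_le_coe_iff.2
            nlinarith [mul_nonneg (show (0:ℝ) ≤ ((g - ε/4) - s) - ε/4 by linarith) hc.le]
        _ = 0 := by norm_num
    have hle : g ≤ g - ε/4 := by
      rw [hgdef, gB_eq]
      exact csInf_le ASet_bddBelow hmem
    linarith
  rw [abs_sub_lt_iff]
  constructor <;> linarith

end S18

theorem statement18 :
    ContinuousOn (fun p : ℝ × ℝ => gB p.1 p.2) (Set.Ioi (1 : ℝ) ×ˢ Set.Ioi (1 : ℝ)) := by
  intro p hp
  have hB₁ : 1 < p.1 := hp.1
  have hB₂ : 1 < p.2 := hp.2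
  rw [Metric.continuousWithinAt_iff]
  intro ε hε
  have hg0 : 0 ≤ gB p.1 p.2 := S18.gB_nonneg hB₁ hB₂
  have hc : 0 < Real.log (p.1*p.2) := Real.log_pos (by nlinarith)
  have hθ : 0 < ε * Real.log (p.1*p.2) / (8 * (gB p.1 p.2 + 2 + ε)) :=
    div_pos (mul_pos hε hc) (by linarith)
  obtain ⟨δ₁, hδ₁pos, hδ₁⟩ := Metric.continuousAt_iff.1
    (Real.continuousAt_log (show p.1 ≠ 0 by positivity)) _ hθ
  obtain ⟨δ₂, hδ₂pos, hδ₂⟩ := Metric.continuousAt_iff.1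
    (Real.continuousAt_log (show p.2 ≠ 0 by positivity)) _ hθ
  refine ⟨min δ₁ δ₂, lt_min hδ₁pos hδ₂pos, ?_⟩
  intro y hy hdist
  have hy₁ : 1 < y.1 := hy.1
  have hy₂ : 1 < y.2 := hy.2
  have hdf : dist y.1 p.1 ≤ dist y p := by
    rw [Prod.dist_eq]
    exact le_max_left _ _
  have hds : dist y.2 p.2 ≤ dist y p := by
    rw [Prod.dist_eq]
    exact le_max_right _ _
  have h1 := hδ₁ (lt_of_le_of_lt hdf (lt_of_lt_of_le hdist (min_le_left _ _)))
  have h2 := hδ₂ (lt_of_le_of_lt hds (lt_of_lt_of_le hdist (min_le_right _ _)))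
  rw [Real.dist_eq] at h1 h2
  rw [Real.dist_eq]
  exact S18.gB_close hB₁ hB₂ hy₁ hy₂ hε h1.le h2.le

end
end
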